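/- arXiv:1405.0680 — 6 statements merged into one kernel-verified Lean document; each statement's English description precedes it below -/
import Mathlib

section
/- Let Σ, Σ̂ ∈ ℝ^{p×p} be symmetric matrices with eigenvalues λ₁ ≥ … ≥ λ_p and λ̂₁ ≥ … ≥ λ̂_p respectively, fix 1 ≤ r ≤ s ≤ p with d := s − r + 1, and assume δ := min(λ_{r−1} − λ_r, λ_s − λ_{s+1}) > 0 (with λ₀ := ∞, λ_{p+1} := −∞). Let V = (v_r, …, v_s) ∈ ℝ^{p×d} and V̂ = (v̂_r, …, v̂_s) ∈ ℝ^{p×d} have orthonormal columns satisfying Σv_j = λ_j v_j and Σ̂v̂_j = λ̂_j v̂_j for j = r, …, s. Then ‖sin Θ(V̂, V)‖_F ≤ 2 d^{1/2} ‖Σ̂ − Σ‖_op / δ. -/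
open Matrix

noncomputable def frobNorm {m n : Type*} [Fintype m] [Fintype n] (A : Matrix m n ℝ) : ℝ :=
  Real.sqrt (∑ i, ∑ j, (A i j) ^ 2)

noncomputable def opNorm {p q : ℕ} (A : Matrix (Fin p) (Fin q) ℝ) : ℝ :=
  ‖LinearMap.toContinuousLinearMap (Matrix.toEuclideanLin A)‖

lemma sumSq_mulVec_le {p q : ℕ} (A : Matrix (Fin p) (Fin q) ℝ) (v : Fin q → ℝ) :
    ∑ i, (A.mulVec v i) ^ 2 ≤ opNorm A ^ 2 * ∑ j, (v j) ^ 2 := by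
  set f := LinearMap.toContinuousLinearMap (Matrix.toEuclideanLin A)
  set x : EuclideanSpace ℝ (Fin q) := (WithLp.equiv 2 (Fin q → ℝ)).symm v
  have hb := f.le_opNorm x
  have hfx : f x = (WithLp.equiv 2 (Fin p → ℝ)).symm (A.mulVec v) := by
    simp [f, x, Matrix.toEuclideanLin_apply_piLp_toLp]
  have hnx : ‖x‖ = Real.sqrt (∑ j, (v j) ^ 2) := by
    rw [EuclideanSpace.norm_eq]
    congr 1
    refine Finset.sum_congr rfl fun j _ => ?_
    simp [x, sq_abs]
  have hnfx : ‖f x‖ = Real.sqrt (∑ i, (A.mulVec v i) ^ 2) := by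
    rw [hfx, EuclideanSpace.norm_eq]
    congr 1
    refine Finset.sum_congr rfl fun i _ => ?_
    simp [sq_abs]
  rw [hnfx, hnx] at hb
  have h1 : (0:ℝ) ≤ ∑ i, (A.mulVec v i) ^ 2 := Finset.sum_nonneg fun _ _ => sq_nonneg _
  have h2 : (0:ℝ) ≤ ∑ j, (v j) ^ 2 := Finset.sum_nonneg fun _ _ => sq_nonneg _
  have := mul_self_le_mul_self (Real.sqrt_nonneg _) hb
  rw [Real.mul_self_sqrt h1] at this
  calc ∑ i, (A.mulVec v i) ^ 2
      ≤ (‖f‖ * Real.sqrt (∑ j, (v j) ^ 2)) * (‖f‖ * Real.sqrt (∑ j, (v j) ^ 2)) := this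
    _ = ‖f‖ ^ 2 * (Real.sqrt (∑ j, (v j) ^ 2) * Real.sqrt (∑ j, (v j) ^ 2)) := by ring
    _ = opNorm A ^ 2 * ∑ j, (v j) ^ 2 := by rw [Real.mul_self_sqrt h2]; rfl

lemma dot_le_sqrt {n : ℕ} (x y : Fin n → ℝ) :
    x ⬝ᵥ y ≤ Real.sqrt (∑ i, (x i) ^ 2) * Real.sqrt (∑ i, (y i) ^ 2) := by
  have h := Finset.sum_mul_sq_le_sq_mul_sq Finset.univ x y
  calc x ⬝ᵥ y ≤ |∑ i, x i * y i| := le_abs_self _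
    _ = Real.sqrt ((∑ i, x i * y i) ^ 2) := (Real.sqrt_sq_eq_abs _).symm
    _ ≤ Real.sqrt ((∑ i, (x i) ^ 2) * ∑ i, (y i) ^ 2) := Real.sqrt_le_sqrt h
    _ = _ := Real.sqrt_mul (Finset.sum_nonneg fun _ _ => sq_nonneg _) _

lemma dot_shift {p q : ℕ} (Q : Matrix (Fin p) (Fin q) ℝ) (x : Fin p → ℝ) (y : Fin q → ℝ) :
    Qᵀ.mulVec x ⬝ᵥ y = x ⬝ᵥ Q.mulVec y := by
  rw [mulVec_transpose, ← dotProduct_mulVec]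

lemma dot_orth {p : ℕ} {Q : Matrix (Fin p) (Fin p) ℝ} (hQ : Qᵀ * Q = 1) (x y : Fin p → ℝ) :
    Qᵀ.mulVec x ⬝ᵥ Qᵀ.mulVec y = x ⬝ᵥ y := by
  have hQQ : Q * Qᵀ = 1 := mul_eq_one_comm.mp hQ
  rw [dot_shift, mulVec_mulVec, hQQ, one_mulVec]

lemma sumSq_orth {p : ℕ} {Q : Matrix (Fin p) (Fin p) ℝ} (hQ : Qᵀ * Q = 1) (x : Fin p → ℝ) :
    ∑ i, (Qᵀ.mulVec x i) ^ 2 = ∑ i, (x i) ^ 2 := by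
  have h := dot_orth hQ x x
  simpa [dotProduct, sq] using h

lemma quad_eq {p : ℕ} (Q : Matrix (Fin p) (Fin p) ℝ) (μ : Fin p → ℝ) (x : Fin p → ℝ) :
    x ⬝ᵥ (Q * Matrix.diagonal μ * Qᵀ).mulVec x = ∑ i, μ i * (Qᵀ.mulVec x i) ^ 2 := by
  set c := Qᵀ.mulVec x with hc
  have h1 : (Q * Matrix.diagonal μ * Qᵀ).mulVec x
      = Q.mulVec ((Matrix.diagonal μ).mulVec c) := by
    rw [← mulVec_mulVec, ← mulVec_mulVec]
  rw [h1, ← dot_shift]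
  simp only [← hc, dotProduct, mulVec_diagonal]
  refine Finset.sum_congr rfl fun i _ => by ring

lemma eig_coord {p : ℕ} {Q S : Matrix (Fin p) (Fin p) ℝ} {μ : Fin p → ℝ} (hQ : Qᵀ * Q = 1)
    (hS : S = Q * Matrix.diagonal μ * Qᵀ) (v : Fin p → ℝ) (i : Fin p) :
    Qᵀ.mulVec (S.mulVec v) i = μ i * Qᵀ.mulVec v i := by
  have h : Qᵀ * S = Matrix.diagonal μ * Qᵀ := by
    rw [hS, ← Matrix.mul_assoc, ← Matrix.mul_assoc, hQ, Matrix.one_mul]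
  rw [mulVec_mulVec, h, ← mulVec_mulVec, mulVec_diagonal]

lemma dot_mulVec_le {n : ℕ} (E : Matrix (Fin n) (Fin n) ℝ) (x : Fin n → ℝ) :
    x ⬝ᵥ E.mulVec x ≤ opNorm E * ∑ i, (x i) ^ 2 := by
  have h1 := dot_le_sqrt x (E.mulVec x)
  have h2 : Real.sqrt (∑ i, (E.mulVec x i) ^ 2)
      ≤ opNorm E * Real.sqrt (∑ i, (x i) ^ 2) := by
    have := sumSq_mulVec_le E x
    calc Real.sqrt (∑ i, (E.mulVec x i) ^ 2) ≤ Real.sqrt (opNorm E ^ 2 * ∑ j, (x j) ^ 2) :=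
          Real.sqrt_le_sqrt this
      _ = opNorm E * Real.sqrt (∑ i, (x i) ^ 2) := by
          rw [Real.sqrt_mul (sq_nonneg _),
            Real.sqrt_sq (show (0:ℝ) ≤ opNorm E from norm_nonneg _)]
  have hs : (0:ℝ) ≤ Real.sqrt (∑ i, (x i) ^ 2) := Real.sqrt_nonneg _
  calc x ⬝ᵥ E.mulVec x ≤ Real.sqrt (∑ i, (x i) ^ 2) * Real.sqrt (∑ i, (E.mulVec x i) ^ 2) := h1
    _ ≤ Real.sqrt (∑ i, (x i) ^ 2) * (opNorm E * Real.sqrt (∑ i, (x i) ^ 2)) :=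
        mul_le_mul_of_nonneg_left h2 hs
    _ = opNorm E * (Real.sqrt (∑ i, (x i) ^ 2) * Real.sqrt (∑ i, (x i) ^ 2)) := by ring
    _ = opNorm E * ∑ i, (x i) ^ 2 := by
        rw [Real.mul_self_sqrt (Finset.sum_nonneg fun _ _ => sq_nonneg _)]

lemma weyl_aux {p : ℕ} (k : ℕ) (hk1 : 1 ≤ k) (hkp : k ≤ p)
    (μ ν : Fin p → ℝ) (Q Qh S Sh : Matrix (Fin p) (Fin p) ℝ)
    (hQ : Qᵀ * Q = 1) (hQh : Qhᵀ * Qh = 1)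
    (hS : S = Q * Matrix.diagonal μ * Qᵀ) (hSh : Sh = Qh * Matrix.diagonal ν * Qhᵀ)
    (a b : ℝ) (ha : ∀ i : Fin p, k ≤ i.1 + 1 → μ i ≤ a)
    (hb : ∀ i : Fin p, i.1 + 1 ≤ k → b ≤ ν i) :
    b ≤ a + opNorm (Sh - S) := by
  let T : (Fin p → ℝ) →ₗ[ℝ] (Fin (k-1) → ℝ) × (Fin (p-k) → ℝ) :=
    { toFun := fun x =>
        (fun i => Qᵀ.mulVec x ⟨i.1, by have := i.2; omega⟩,
         fun i => Qhᵀ.mulVec x ⟨k + i.1, by have := i.2; omega⟩)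
      map_add' := fun x y => by
        ext i <;> simp [Matrix.mulVec_add]
      map_smul' := fun c x => by
        ext i <;> simp [Matrix.mulVec_smul] }
  have hker : LinearMap.ker T ≠ ⊥ := by
    intro h
    have hinj : Function.Injective T := LinearMap.ker_eq_bot.mp h
    have hle := LinearMap.finrank_le_finrank_of_injective hinj
    rw [Module.finrank_fin_fun, Module.finrank_prod, Module.finrank_fin_fun,
      Module.finrank_fin_fun] at hle
    omega
  obtain ⟨x, hxker, hx0⟩ := (Submodule.ne_bot_iff _).mp hker
  have hTx : T x = 0 := LinearMap.mem_ker.mp hxker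
  have hc0 : ∀ i : Fin p, i.1 + 1 < k → Qᵀ.mulVec x i = 0 := by
    intro i hi
    have := congrFun (congrArg Prod.fst hTx) ⟨i.1, by omega⟩
    simpa [T] using this
  have hch0 : ∀ i : Fin p, k < i.1 + 1 → Qhᵀ.mulVec x i = 0 := by
    intro i hi
    have h2 : i.1 - k < p - k := by have := i.2; omega
    have := congrFun (congrArg Prod.snd hTx) ⟨i.1 - k, h2⟩
    have he : i = (⟨k + (i.1 - k), by have := i.2; omega⟩ : Fin p) := Fin.ext (by simp; omega)
    rw [he]
    simpa [T] using this
  set t := ∑ i, (x i) ^ 2 with ht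
  have htpos : 0 < t := by
    have hex : ∃ i, x i ≠ 0 := by
      by_contra h
      push_neg at h
      exact hx0 (funext h)
    obtain ⟨i0, hi0⟩ := hex
    refine Finset.sum_pos' (fun _ _ => sq_nonneg _) ⟨i0, Finset.mem_univ _, ?_⟩
    exact lt_of_le_of_ne (sq_nonneg _) (Ne.symm (pow_ne_zero 2 hi0))
  have hSx : x ⬝ᵥ S.mulVec x ≤ a * t := by
    rw [hS, quad_eq]
    have h : ∀ i : Fin p, μ i * (Qᵀ.mulVec x i) ^ 2 ≤ a * (Qᵀ.mulVec x i) ^ 2 := by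
      intro i
      rcases lt_or_ge (i.1 + 1) k with h | h
      · rw [hc0 i h]; simp
      · exact mul_le_mul_of_nonneg_right (ha i h) (sq_nonneg _)
    calc ∑ i, μ i * (Qᵀ.mulVec x i) ^ 2 ≤ ∑ i, a * (Qᵀ.mulVec x i) ^ 2 :=
        Finset.sum_le_sum fun i _ => h i
      _ = a * ∑ i, (Qᵀ.mulVec x i) ^ 2 := by rw [Finset.mul_sum]
      _ = a * t := by rw [sumSq_orth hQ]
  have hShx : b * t ≤ x ⬝ᵥ Sh.mulVec x := by
    rw [hSh, quad_eq]
    have h : ∀ i : Fin p, b * (Qhᵀ.mulVec x i) ^ 2 ≤ ν i * (Qhᵀ.mulVec x i) ^ 2 := by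
      intro i
      rcases le_or_gt (i.1 + 1) k with h | h
      · exact mul_le_mul_of_nonneg_right (hb i h) (sq_nonneg _)
      · rw [hch0 i h]; simp
    calc b * t = b * ∑ i, (Qhᵀ.mulVec x i) ^ 2 := by rw [sumSq_orth hQh]
      _ = ∑ i, b * (Qhᵀ.mulVec x i) ^ 2 := by rw [Finset.mul_sum]
      _ ≤ ∑ i, ν i * (Qhᵀ.mulVec x i) ^ 2 := Finset.sum_le_sum fun i _ => h i
  have hE : x ⬝ᵥ (Sh - S).mulVec x ≤ opNorm (Sh - S) * t := dot_mulVec_le _ x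
  have hsplit : x ⬝ᵥ Sh.mulVec x = x ⬝ᵥ S.mulVec x + x ⬝ᵥ (Sh - S).mulVec x := by
    rw [Matrix.sub_mulVec, dotProduct_sub]; ring
  have hfin : b * t ≤ (a + opNorm (Sh - S)) * t := by
    calc b * t ≤ x ⬝ᵥ Sh.mulVec x := hShx
      _ = x ⬝ᵥ S.mulVec x + x ⬝ᵥ (Sh - S).mulVec x := hsplit
      _ ≤ a * t + opNorm (Sh - S) * t := add_le_add hSx hE
      _ = (a + opNorm (Sh - S)) * t := by ring
  exact le_of_mul_le_mul_right hfin htpos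

lemma opNorm_sub_comm {p : ℕ} (A B : Matrix (Fin p) (Fin p) ℝ) :
    opNorm (A - B) = opNorm (B - A) := by
  unfold opNorm
  rw [show A - B = -(B - A) by rw [neg_sub], map_neg, map_neg, norm_neg]

lemma sq_sum_orth_rows {d : ℕ} (M : Matrix (Fin d) (Fin d) ℝ)
    (hM : ∀ t u : Fin d, ∑ k, M t k * M u k = if t = u then 1 else 0) (x : Fin d → ℝ) :
    ∑ k, (∑ t, x t * M t k) ^ 2 = ∑ t, (x t) ^ 2 := by
  calc ∑ k, (∑ t, x t * M t k) ^ 2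
      = ∑ k, ∑ t, ∑ u, (x t * M t k) * (x u * M u k) := by
        refine Finset.sum_congr rfl fun k _ => ?_
        rw [sq, Finset.sum_mul_sum]
    _ = ∑ t, ∑ k, ∑ u, (x t * M t k) * (x u * M u k) := Finset.sum_comm
    _ = ∑ t, ∑ u, ∑ k, (x t * M t k) * (x u * M u k) := by
        refine Finset.sum_congr rfl fun t _ => Finset.sum_comm
    _ = ∑ t, ∑ u, (x t * x u) * ∑ k, M t k * M u k := by
        refine Finset.sum_congr rfl fun t _ => Finset.sum_congr rfl fun u _ => ?_
        rw [Finset.mul_sum]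
        refine Finset.sum_congr rfl fun k _ => by ring
    _ = ∑ t, (x t) ^ 2 := by
        refine Finset.sum_congr rfl fun t _ => ?_
        simp only [hM, mul_ite, mul_one, mul_zero]
        rw [Finset.sum_ite_eq Finset.univ t (fun u => x t * x u)]
        simp [sq]

theorem stmt0
    (p r s d : ℕ) (hr : 1 ≤ r) (hrs : r ≤ s) (hsp : s ≤ p) (hd : d = s - r + 1)
    (lam lamh : ℕ → ℝ)
    (hmono : ∀ i j, 1 ≤ i → i ≤ j → j ≤ p → lam j ≤ lam i)
    (hmonoh : ∀ i j, 1 ≤ i → i ≤ j → j ≤ p → lamh j ≤ lamh i)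
    (S Sh : Matrix (Fin p) (Fin p) ℝ) (hSsymm : S.IsSymm) (hShsymm : Sh.IsSymm)
    (hSspec : ∃ Q : Matrix (Fin p) (Fin p) ℝ, Qᵀ * Q = 1 ∧
      S = Q * Matrix.diagonal (fun i : Fin p => lam (i.1 + 1)) * Qᵀ)
    (hShspec : ∃ Q : Matrix (Fin p) (Fin p) ℝ, Qᵀ * Q = 1 ∧
      Sh = Q * Matrix.diagonal (fun i : Fin p => lamh (i.1 + 1)) * Qᵀ)
    (δ : ℝ) (hδ : 0 < δ)
    (hgapr : 1 < r → δ ≤ lam (r - 1) - lam r)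
    (hgaps : s < p → δ ≤ lam s - lam (s + 1))
    (V Vh : Matrix (Fin p) (Fin d) ℝ) (hV : Vᵀ * V = 1) (hVh : Vhᵀ * Vh = 1)
    (hVeig : ∀ j : Fin d, S.mulVec (fun i => V i j) = lam (r + j.1) • (fun i => V i j))
    (hVheig : ∀ j : Fin d, Sh.mulVec (fun i => Vh i j) = lamh (r + j.1) • (fun i => Vh i j)) :
    Real.sqrt ((d : ℝ) - (frobNorm (Vhᵀ * V)) ^ 2) ≤ 2 * Real.sqrt d * opNorm (Sh - S) / δ := by
  obtain ⟨Q, hQ, hS⟩ := hSspec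
  obtain ⟨Qh, hQh, hSh⟩ := hShspec
  set ε := opNorm (Sh - S) with hε
  have hε0 : 0 ≤ ε := norm_nonneg _
  have hfrob : frobNorm (Vhᵀ * V) ^ 2 = ∑ j, ∑ k, ((Vhᵀ * V) j k) ^ 2 :=
    Real.sq_sqrt (Finset.sum_nonneg fun _ _ => Finset.sum_nonneg fun _ _ => sq_nonneg _)
  rcases le_or_gt δ (2 * ε) with hcase | hcase
  · have h1 : Real.sqrt ((d:ℝ) - frobNorm (Vhᵀ * V) ^ 2) ≤ Real.sqrt d :=
      Real.sqrt_le_sqrt (by nlinarith [sq_nonneg (frobNorm (Vhᵀ * V))])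
    have h2 : Real.sqrt (d:ℝ) ≤ 2 * Real.sqrt d * ε / δ := by
      rw [le_div_iff₀ hδ]
      nlinarith [Real.sqrt_nonneg (d:ℝ)]
    exact h1.trans h2
  · -- main case : 2ε < δ
    set μ : Fin p → ℝ := fun i : Fin p => lam (i.1 + 1) with hμ
    set ν : Fin p → ℝ := fun i : Fin p => lamh (i.1 + 1) with hν
    -- Weyl inequalities
    have weyl1 : lamh r ≤ lam r + ε := by
      refine weyl_aux r hr (hrs.trans hsp) μ ν Q Qh S Sh hQ hQh hS hSh (lam r) (lamh r) ?_ ?_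
      · intro i hi
        exact hmono r (i.1 + 1) hr hi (by have := i.2; omega)
      · intro i hi
        exact hmonoh (i.1 + 1) r (by omega) hi (hrs.trans hsp)
    have weyl2 : lam s ≤ lamh s + ε := by
      have h := weyl_aux s (hr.trans hrs) hsp ν μ Qh Q Sh S hQh hQ hSh hS (lamh s) (lam s) ?_ ?_
      · rwa [opNorm_sub_comm, ← hε] at h
      · intro i hi
        exact hmonoh s (i.1 + 1) (hr.trans hrs) hi (by have := i.2; omega)
      · intro i hi
        exact hmono (i.1 + 1) s (by omega) hi hsp
    -- column norms
    have hVhcol : ∀ j : Fin d, ∑ i, (Vh i j) ^ 2 = 1 := by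
      intro j
      have h : ∑ i, Vh i j * Vh i j = 1 := by
        have := congrFun (congrFun hVh j) j
        simpa [Matrix.mul_apply, Matrix.transpose_apply, Matrix.one_apply] using this
      simpa [sq] using h
    have hVdot : ∀ k k' : Fin d,
        (fun i => V i k) ⬝ᵥ (fun i => V i k') = if k = k' then 1 else 0 := by
      intro k k'
      have := congrFun (congrFun hV k) k'
      simpa [Matrix.mul_apply, Matrix.transpose_apply, Matrix.one_apply, dotProduct] using this
    -- vanishing of V-coordinates off the block
    have hA0 : ∀ (k : Fin d) (i : Fin p), (i.1 + 1 < r ∨ s < i.1 + 1) →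
        Qᵀ.mulVec (fun i' => V i' k) i = 0 := by
      intro k i hi
      have hrk1 : r + k.1 ≤ s := by have := k.2; omega
      have heq : μ i * Qᵀ.mulVec (fun i' => V i' k) i
          = lam (r + k.1) * Qᵀ.mulVec (fun i' => V i' k) i := by
        have h1 := eig_coord hQ hS (fun i' => V i' k) i
        rw [hVeig k, Matrix.mulVec_smul] at h1
        simpa using h1.symm
      have hub : lam (r + k.1) ≤ lam r := hmono r (r + k.1) hr (by omega) (by omega)
      have hlb : lam s ≤ lam (r + k.1) := hmono (r + k.1) s (by omega) hrk1 hsp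
      have hne : μ i ≠ lam (r + k.1) := by
        show lam (i.1 + 1) ≠ lam (r + k.1)
        rcases hi with hi | hi
        · have hg := hgapr (by omega)
          have h3 : lam (r - 1) ≤ lam (i.1 + 1) :=
            hmono (i.1 + 1) (r - 1) (by omega) (by omega) (by omega)
          intro hcon; linarith
        · have hg := hgaps (by have := i.2; omega)
          have h3 : lam (i.1 + 1) ≤ lam (s + 1) :=
            hmono (s + 1) (i.1 + 1) (by omega) (by omega) (by have := i.2; omega)
          intro hcon; linarith
      by_contra h
      exact hne (mul_right_cancel₀ h heq)
    -- the embedding of the block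
    let emb : Fin d → Fin p := fun t => ⟨r - 1 + t.1, by have := t.2; omega⟩
    have hembInj : Function.Injective emb := by
      intro t u h
      apply Fin.ext
      have := congrArg Fin.val h
      simpa [emb] using this
    have hembSurj : ∀ i : Fin p, r ≤ i.1 + 1 → i.1 + 1 ≤ s → ∃ t, emb t = i := by
      intro i h1 h2
      exact ⟨⟨i.1 - (r - 1), by omega⟩, Fin.ext (by simp [emb]; omega)⟩
    have hsum_emb : ∀ f : Fin p → ℝ, (∀ i : Fin p, (i.1 + 1 < r ∨ s < i.1 + 1) → f i = 0) →
        ∑ i, f i = ∑ t, f (emb t) := by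
      intro f hf
      have himg : ∀ i : Fin p, i ∉ Finset.univ.image emb → f i = 0 := by
        intro i hi
        apply hf
        by_contra h
        push_neg at h
        obtain ⟨h1, h2⟩ := h
        obtain ⟨t, ht⟩ := hembSurj i (by omega) (by omega)
        exact hi (Finset.mem_image.mpr ⟨t, Finset.mem_univ _, ht⟩)
      calc ∑ i, f i = ∑ i ∈ Finset.univ.image emb, f i :=
          (Finset.sum_subset (Finset.subset_univ _) (fun i _ hi => himg i hi)).symm
        _ = ∑ t, f (emb t) := Finset.sum_image (fun t _ u _ h => hembInj h)
    -- the block matrix of V-coordinates is orthogonal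
    set M : Matrix (Fin d) (Fin d) ℝ := fun t k => Qᵀ.mulVec (fun i => V i k) (emb t) with hM
    have hMcol : Mᵀ * M = 1 := by
      ext k k'
      rw [Matrix.mul_apply]
      have h1 : ∑ t, Mᵀ k t * M t k'
          = ∑ i, Qᵀ.mulVec (fun i' => V i' k) i * Qᵀ.mulVec (fun i' => V i' k') i := by
        rw [hsum_emb _ (fun i hi => by rw [hA0 k i hi, zero_mul])]
        rfl
      rw [h1]
      have h2 : ∑ i, Qᵀ.mulVec (fun i' => V i' k) i * Qᵀ.mulVec (fun i' => V i' k') i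
          = (fun i => V i k) ⬝ᵥ (fun i => V i k') := dot_orth hQ _ _
      rw [h2, hVdot k k', Matrix.one_apply]
    have hMrow : ∀ t u : Fin d, ∑ k, M t k * M u k = if t = u then 1 else 0 := by
      intro t u
      have h := mul_eq_one_comm.mp hMcol
      have := congrFun (congrFun h t) u
      simpa [Matrix.mul_apply, Matrix.transpose_apply, Matrix.one_apply] using this
    -- key spectral bound per column of Vh
    have hkey : ∀ j : Fin d,
        ∑ i, (μ i - lamh (r + j.1)) ^ 2 * (Qᵀ.mulVec (fun i' => Vh i' j) i) ^ 2 ≤ ε ^ 2 := by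
      intro j
      have hw : ∀ i, Qᵀ.mulVec ((Sh - S).mulVec (fun i' => Vh i' j)) i
          = (lamh (r + j.1) - μ i) * Qᵀ.mulVec (fun i' => Vh i' j) i := by
        intro i
        have h1 : (Sh - S).mulVec (fun i' => Vh i' j)
            = lamh (r + j.1) • (fun i' => Vh i' j) - S.mulVec (fun i' => Vh i' j) := by
          rw [Matrix.sub_mulVec, hVheig j]
        rw [h1, Matrix.mulVec_sub, Matrix.mulVec_smul]
        have h2 := eig_coord hQ hS (fun i' => Vh i' j) i
        simp only [Pi.sub_apply, Pi.smul_apply, smul_eq_mul, h2]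
        ring
      have h3 : ∑ i, (Qᵀ.mulVec ((Sh - S).mulVec (fun i' => Vh i' j)) i) ^ 2 ≤ ε ^ 2 := by
        rw [sumSq_orth hQ]
        have h4 := sumSq_mulVec_le (Sh - S) (fun i' => Vh i' j)
        rw [hVhcol j, mul_one] at h4
        exact h4
      calc ∑ i, (μ i - lamh (r + j.1)) ^ 2 * (Qᵀ.mulVec (fun i' => Vh i' j) i) ^ 2
          = ∑ i, (Qᵀ.mulVec ((Sh - S).mulVec (fun i' => Vh i' j)) i) ^ 2 := by
            refine Finset.sum_congr rfl fun i _ => ?_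
            rw [hw i]; ring
        _ ≤ ε ^ 2 := h3
    -- Frobenius norm identity
    have hPentry : ∀ j k : Fin d, (Vhᵀ * V) j k
        = ∑ t, Qᵀ.mulVec (fun i => Vh i j) (emb t) * M t k := by
      intro j k
      have h0 : (Vhᵀ * V) j k = (fun i => Vh i j) ⬝ᵥ (fun i => V i k) := by
        simp [Matrix.mul_apply, Matrix.transpose_apply, dotProduct]
      have h1 : (fun i => Vh i j) ⬝ᵥ (fun i => V i k)
          = ∑ i, Qᵀ.mulVec (fun i' => Vh i' j) i * Qᵀ.mulVec (fun i' => V i' k) i :=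
        (dot_orth hQ _ _).symm
      rw [h0, h1, hsum_emb _ (fun i hi => by rw [hA0 k i hi, mul_zero])]
    have hfrob2 : frobNorm (Vhᵀ * V) ^ 2
        = ∑ j : Fin d, ∑ t : Fin d, (Qᵀ.mulVec (fun i => Vh i j) (emb t)) ^ 2 := by
      rw [hfrob]
      refine Finset.sum_congr rfl fun j _ => ?_
      have h1 : ∀ k, ((Vhᵀ * V) j k) ^ 2
          = (∑ t, Qᵀ.mulVec (fun i => Vh i j) (emb t) * M t k) ^ 2 := fun k => by
        rw [hPentry j k]
      calc ∑ k, ((Vhᵀ * V) j k) ^ 2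
          = ∑ k, (∑ t, Qᵀ.mulVec (fun i => Vh i j) (emb t) * M t k) ^ 2 :=
            Finset.sum_congr rfl fun k _ => h1 k
        _ = ∑ t, (Qᵀ.mulVec (fun i => Vh i j) (emb t)) ^ 2 :=
            sq_sum_orth_rows M hMrow _
    -- off-block mass
    set offF : Finset (Fin p) := Finset.univ.filter (fun i => i.1 + 1 < r ∨ s < i.1 + 1)
      with hoffF
    have hmass : ∀ j : Fin d,
        ∑ i ∈ offF, (Qᵀ.mulVec (fun i' => Vh i' j) i) ^ 2
          = 1 - ∑ t, (Qᵀ.mulVec (fun i => Vh i j) (emb t)) ^ 2 := by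
      intro j
      have htot : ∑ i, (Qᵀ.mulVec (fun i' => Vh i' j) i) ^ 2 = 1 := by
        rw [sumSq_orth hQ, hVhcol j]
      have hcompl : Finset.univ.filter (fun i : Fin p => ¬(i.1 + 1 < r ∨ s < i.1 + 1))
          = Finset.univ.image emb := by
        ext i
        simp only [Finset.mem_filter, Finset.mem_univ, true_and, Finset.mem_image]
        constructor
        · intro h
          push_neg at h
          obtain ⟨t, ht⟩ := hembSurj i (by omega) (by omega)
          exact ⟨t, ht⟩
        · rintro ⟨t, rfl⟩
          have := t.2
          simp only [emb]
          omega
      have hsplit := Finset.sum_filter_add_sum_filter_not Finset.univ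
        (fun i : Fin p => i.1 + 1 < r ∨ s < i.1 + 1)
        (fun i => (Qᵀ.mulVec (fun i' => Vh i' j) i) ^ 2)
      rw [htot] at hsplit
      have himage : ∑ i ∈ Finset.univ.filter (fun i : Fin p => ¬(i.1 + 1 < r ∨ s < i.1 + 1)),
          (Qᵀ.mulVec (fun i' => Vh i' j) i) ^ 2
          = ∑ t, (Qᵀ.mulVec (fun i => Vh i j) (emb t)) ^ 2 := by
        rw [hcompl]
        exact Finset.sum_image (fun t _ u _ h => hembInj h)
      rw [himage] at hsplit
      linarith [hsplit]
    -- gap bound on off-block indices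
    have hgapbd : ∀ (j : Fin d) (i : Fin p), i ∈ offF →
        (δ / 2) ^ 2 ≤ (μ i - lamh (r + j.1)) ^ 2 := by
      intro j i hi
      rw [hoffF, Finset.mem_filter] at hi
      obtain ⟨-, hi⟩ := hi
      have hrj : r + j.1 ≤ s := by have := j.2; omega
      have hup : lamh (r + j.1) ≤ lamh r := hmonoh r (r + j.1) hr (by omega) (by omega)
      have hlo : lamh s ≤ lamh (r + j.1) := hmonoh (r + j.1) s (by omega) hrj hsp
      rcases hi with hi | hi
      · have hg := hgapr (by omega)
        have h3 : lam (r - 1) ≤ lam (i.1 + 1) :=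
          hmono (i.1 + 1) (r - 1) (by omega) (by omega) (by omega)
        have hdist : δ / 2 ≤ μ i - lamh (r + j.1) := by
          show δ / 2 ≤ lam (i.1 + 1) - lamh (r + j.1)
          linarith
        exact pow_le_pow_left₀ (by linarith) hdist 2
      · have hg := hgaps (by have := i.2; omega)
        have h3 : lam (i.1 + 1) ≤ lam (s + 1) :=
          hmono (s + 1) (i.1 + 1) (by omega) (by omega) (by have := i.2; omega)
        have hdist : δ / 2 ≤ lamh (r + j.1) - μ i := by
          show δ / 2 ≤ lamh (r + j.1) - lam (i.1 + 1)
          linarith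
        have h4 : (δ / 2) ^ 2 ≤ (lamh (r + j.1) - μ i) ^ 2 :=
          pow_le_pow_left₀ (by linarith) hdist 2
        calc (δ / 2) ^ 2 ≤ (lamh (r + j.1) - μ i) ^ 2 := h4
          _ = (μ i - lamh (r + j.1)) ^ 2 := by ring
    -- per-column off-mass bound
    have hoffbd : ∀ j : Fin d,
        ∑ i ∈ offF, (Qᵀ.mulVec (fun i' => Vh i' j) i) ^ 2 ≤ (2 * ε / δ) ^ 2 := by
      intro j
      have h1 : (δ / 2) ^ 2 * ∑ i ∈ offF, (Qᵀ.mulVec (fun i' => Vh i' j) i) ^ 2 ≤ ε ^ 2 := by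
        calc (δ / 2) ^ 2 * ∑ i ∈ offF, (Qᵀ.mulVec (fun i' => Vh i' j) i) ^ 2
            = ∑ i ∈ offF, (δ / 2) ^ 2 * (Qᵀ.mulVec (fun i' => Vh i' j) i) ^ 2 :=
              Finset.mul_sum _ _ _
          _ ≤ ∑ i ∈ offF, (μ i - lamh (r + j.1)) ^ 2 * (Qᵀ.mulVec (fun i' => Vh i' j) i) ^ 2 :=
              Finset.sum_le_sum fun i hi =>
                mul_le_mul_of_nonneg_right (hgapbd j i hi) (sq_nonneg _)
          _ ≤ ∑ i, (μ i - lamh (r + j.1)) ^ 2 * (Qᵀ.mulVec (fun i' => Vh i' j) i) ^ 2 :=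
              Finset.sum_le_sum_of_subset_of_nonneg (Finset.subset_univ _)
                (fun i _ _ => mul_nonneg (sq_nonneg _) (sq_nonneg _))
          _ ≤ ε ^ 2 := hkey j
      have hq : (0:ℝ) < (δ / 2) ^ 2 := by positivity
      have h2 : ∑ i ∈ offF, (Qᵀ.mulVec (fun i' => Vh i' j) i) ^ 2 ≤ ε ^ 2 / (δ / 2) ^ 2 := by
        rw [le_div_iff₀ hq]
        linarith [h1]
      calc ∑ i ∈ offF, (Qᵀ.mulVec (fun i' => Vh i' j) i) ^ 2 ≤ ε ^ 2 / (δ / 2) ^ 2 := h2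
        _ = (2 * ε / δ) ^ 2 := by
            field_simp
    -- total bound
    have hbound : (d : ℝ) - frobNorm (Vhᵀ * V) ^ 2 ≤ d * (2 * ε / δ) ^ 2 := by
      rw [hfrob2]
      have h1 : (d : ℝ) - ∑ j : Fin d, ∑ t : Fin d, (Qᵀ.mulVec (fun i => Vh i j) (emb t)) ^ 2
          = ∑ j : Fin d, (1 - ∑ t : Fin d, (Qᵀ.mulVec (fun i => Vh i j) (emb t)) ^ 2) := by
        rw [Finset.sum_sub_distrib]
        simp
      rw [h1]
      calc ∑ j : Fin d, (1 - ∑ t : Fin d, (Qᵀ.mulVec (fun i => Vh i j) (emb t)) ^ 2)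
          = ∑ j : Fin d, ∑ i ∈ offF, (Qᵀ.mulVec (fun i' => Vh i' j) i) ^ 2 :=
            Finset.sum_congr rfl fun j _ => (hmass j).symm
        _ ≤ ∑ j : Fin d, (2 * ε / δ) ^ 2 := Finset.sum_le_sum fun j _ => hoffbd j
        _ = d * (2 * ε / δ) ^ 2 := by simp [mul_comm]
    calc Real.sqrt ((d : ℝ) - frobNorm (Vhᵀ * V) ^ 2)
        ≤ Real.sqrt ((d : ℝ) * (2 * ε / δ) ^ 2) := Real.sqrt_le_sqrt hbound
      _ = Real.sqrt d * (2 * ε / δ) := by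
          rw [Real.sqrt_mul (Nat.cast_nonneg d), Real.sqrt_sq (by positivity)]
      _ = 2 * Real.sqrt d * ε / δ := by ring
end

section
/- Let Σ, Σ̂ ∈ ℝ^{p×p} be symmetric matrices with eigenvalues λ₁ ≥ … ≥ λ_p and λ̂₁ ≥ … ≥ λ̂_p respectively, fix 1 ≤ r ≤ s ≤ p with d := s − r + 1, and assume δ := min(λ_{r−1} − λ_r, λ_s − λ_{s+1}) > 0 (with λ₀ := ∞, λ_{p+1} := −∞). Let V = (v_r, …, v_s) ∈ ℝ^{p×d} and V̂ = (v̂_r, …, v̂_s) ∈ ℝ^{p×d} have orthonormal columns satisfying Σv_j = λ_j v_j and Σ̂v̂_j = λ̂_j v̂_j for j = r, …, s. Then ‖sin Θ(V̂, V)‖_F ≤ 2 ‖Σ̂ − Σ‖_F / δ. -/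
open Matrix

section Helpers

variable {p : ℕ}

lemma dot_sum_left {κ : Type*} (s : Finset κ) (g : κ → Fin p → ℝ) (v : Fin p → ℝ) :
    (∑ i ∈ s, g i) ⬝ᵥ v = ∑ i ∈ s, g i ⬝ᵥ v := by
  classical
  induction s using Finset.induction_on with
  | empty => simp
  | insert _ _ h ih => rw [Finset.sum_insert h, Finset.sum_insert h, add_dotProduct, ih]

lemma dot_sum_right {κ : Type*} (s : Finset κ) (g : κ → Fin p → ℝ) (v : Fin p → ℝ) :
    v ⬝ᵥ (∑ i ∈ s, g i) = ∑ i ∈ s, v ⬝ᵥ g i := by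
  classical
  induction s using Finset.induction_on with
  | empty => simp
  | insert _ _ h ih => rw [Finset.sum_insert h, Finset.sum_insert h, dotProduct_add, ih]

lemma li_of_orthonormal {ι : Type*} [Fintype ι] [DecidableEq ι] (f : ι → Fin p → ℝ)
    (h : ∀ i j, f i ⬝ᵥ f j = if i = j then 1 else 0) : LinearIndependent ℝ f := by
  rw [Fintype.linearIndependent_iff]
  intro c hc j
  have h2 : (∑ i : ι, c i • f i) ⬝ᵥ f j = ∑ i : ι, c i * (f i ⬝ᵥ f j) := by
    rw [dot_sum_left]
    exact Finset.sum_congr rfl fun i _ => smul_dotProduct _ _ _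
  rw [hc] at h2
  simp only [h, mul_ite, mul_one, mul_zero, Finset.sum_ite_eq', Finset.mem_univ, if_true,
    zero_dotProduct] at h2
  exact h2.symm

lemma eig_orth (S : Matrix (Fin p) (Fin p) ℝ) (hS : S.IsSymm) {x y : Fin p → ℝ} {a b : ℝ}
    (hx : S *ᵥ x = a • x) (hy : S *ᵥ y = b • y) (hab : a ≠ b) : x ⬝ᵥ y = 0 := by
  have h1 : x ⬝ᵥ (S *ᵥ y) = (Sᵀ *ᵥ x) ⬝ᵥ y := by
    rw [Matrix.dotProduct_mulVec, ← Matrix.vecMul_transpose, Matrix.transpose_transpose]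
  rw [hS, hx, hy, dotProduct_smul, smul_dotProduct, smul_eq_mul, smul_eq_mul] at h1
  have h2 : (b - a) * (x ⬝ᵥ y) = 0 := by rw [sub_mul, h1, sub_self]
  exact (mul_eq_zero.mp h2).resolve_left (sub_ne_zero.mpr (Ne.symm hab))

lemma dot_self_pos {v : Fin p → ℝ} (h : v ≠ 0) : 0 < v ⬝ᵥ v := by
  rcases (Finset.sum_nonneg fun i _ => mul_self_nonneg (v i) : (0:ℝ) ≤ v ⬝ᵥ v).lt_or_eq with h1 | h1
  · exact h1
  · exact absurd ((dotProduct_self_eq_zero).1 h1.symm) h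

end Helpers

section Step

variable {p : ℕ}

lemma exists_orth_eigvec (S : Matrix (Fin p) (Fin p) ℝ) (hS : S.IsSymm) (lam : Fin p → ℝ)
    (Q : Matrix (Fin p) (Fin p) ℝ) (hQ : Qᵀ * Q = 1) (hSQ : S = Q * Matrix.diagonal lam * Qᵀ)
    (T : Finset (Fin p)) (f : Fin p → Fin p → ℝ)
    (hf1 : ∀ β ∈ T, S *ᵥ f β = lam β • f β)
    (hf2 : ∀ β ∈ T, ∀ γ ∈ T, f β ⬝ᵥ f γ = if β = γ then 1 else 0)
    (β₀ : Fin p) (hβ₀ : β₀ ∉ T) :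
    ∃ w : Fin p → ℝ, S *ᵥ w = lam β₀ • w ∧ w ⬝ᵥ w = 1 ∧ ∀ β ∈ T, f β ⬝ᵥ w = 0 := by
  classical
  -- the eigenspace K
  set K : Submodule ℝ (Fin p → ℝ) := LinearMap.ker (S - lam β₀ • (1 : Matrix (Fin p) (Fin p) ℝ)).mulVecLin with hK
  have mem_K : ∀ x : Fin p → ℝ, x ∈ K ↔ S *ᵥ x = lam β₀ • x := by
    intro x
    rw [hK, LinearMap.mem_ker, Matrix.mulVecLin_apply, Matrix.sub_mulVec,
      Matrix.smul_mulVec, Matrix.one_mulVec, sub_eq_zero]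
  -- columns of Q are eigenvectors
  have hSQ2 : S * Q = Q * Matrix.diagonal lam := by
    rw [hSQ, Matrix.mul_assoc, Matrix.mul_assoc, hQ, Matrix.mul_one]
  have hQcol_eig : ∀ β, S *ᵥ (fun i => Q i β) = lam β • (fun i => Q i β) := by
    intro β
    funext i
    have h1 : (S * Q) i β = (Q * Matrix.diagonal lam) i β := by rw [hSQ2]
    rw [Matrix.mul_diagonal] at h1
    simpa [Matrix.mulVec, Matrix.mul_apply, dotProduct, mul_comm] using h1
  have hQcol_on : ∀ β γ, (fun i => Q i β) ⬝ᵥ (fun i => Q i γ) = if β = γ then (1:ℝ) else 0 := by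
    intro β γ
    have h1 : (Qᵀ * Q) β γ = (1 : Matrix (Fin p) (Fin p) ℝ) β γ := by rw [hQ]
    simpa [Matrix.mul_apply, Matrix.one_apply, dotProduct, Matrix.transpose_apply] using h1
  -- dimension lower bound for K
  have hsub1 : Submodule.span ℝ (Set.range fun β : {β : Fin p // lam β = lam β₀} =>
      (fun i => Q i β.1)) ≤ K := by
    rw [Submodule.span_le]
    rintro x ⟨β, rfl⟩
    rw [SetLike.mem_coe, mem_K, hQcol_eig, β.2]
  have hcard1 : Module.finrank ℝ (Submodule.span ℝ (Set.range fun β : {β : Fin p // lam β = lam β₀} =>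
      (fun i => Q i β.1))) = Fintype.card {β : Fin p // lam β = lam β₀} := by
    apply finrank_span_eq_card
    apply li_of_orthonormal
    intro i j
    rw [hQcol_on]
    by_cases h : i = j
    · simp [h]
    · rw [if_neg h, if_neg (fun hc => h (Subtype.ext hc))]
  have hdimK : Fintype.card {β : Fin p // lam β = lam β₀} ≤ Module.finrank ℝ K := by
    rw [← hcard1]; exact Submodule.finrank_mono hsub1
  -- span of already chosen vectors with this eigenvalue
  set sp : Submodule ℝ (Fin p → ℝ) := Submodule.span ℝ
    (Set.range fun β : {β : Fin p // β ∈ T ∧ lam β = lam β₀} => f β.1) with hsp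
  have hcard2 : Module.finrank ℝ sp = Fintype.card {β : Fin p // β ∈ T ∧ lam β = lam β₀} := by
    apply finrank_span_eq_card
    apply li_of_orthonormal
    intro i j
    rw [hf2 i.1 i.2.1 j.1 j.2.1]
    by_cases h : i = j
    · simp [h]
    · rw [if_neg h, if_neg (fun hc => h (Subtype.ext hc))]
  have hlt : Module.finrank ℝ sp < Module.finrank ℝ K := by
    refine lt_of_lt_of_le ?_ hdimK
    rw [hcard2, Fintype.card_subtype, Fintype.card_subtype]
    apply Finset.card_lt_card
    constructor
    · intro x hx
      simp only [Finset.mem_filter] at hx ⊢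
      exact ⟨hx.1, hx.2.2⟩
    · intro hc
      have : β₀ ∈ Finset.univ.filter fun β => β ∈ T ∧ lam β = lam β₀ :=
        hc (by simp)
      simp only [Finset.mem_filter] at this
      exact hβ₀ this.2.1
  obtain ⟨x, hxK, hxsp⟩ := SetLike.not_le_iff_exists.mp fun hc =>
    absurd (Submodule.finrank_mono hc) (not_le.mpr hlt)
  -- project away the chosen directions
  set proj : Fin p → ℝ := ∑ β ∈ T.filter fun β => lam β = lam β₀, (f β ⬝ᵥ x) • f β with hproj
  have hprojsp : proj ∈ sp := by
    apply Submodule.sum_mem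
    intro β hβ
    simp only [Finset.mem_filter] at hβ
    exact Submodule.smul_mem _ _ (Submodule.subset_span ⟨⟨β, hβ⟩, rfl⟩)
  set y : Fin p → ℝ := x - proj with hy
  have hy0 : y ≠ 0 := by
    intro hc
    exact hxsp (by rw [show x = proj from by rw [← sub_eq_zero]; exact hc]; exact hprojsp)
  have hyK : y ∈ K := by
    refine Submodule.sub_mem _ hxK (Submodule.sum_mem _ fun β hβ => ?_)
    simp only [Finset.mem_filter] at hβ
    refine Submodule.smul_mem _ _ ?_
    rw [mem_K, hf1 β hβ.1, hβ.2]
  have hyeig : S *ᵥ y = lam β₀ • y := (mem_K y).mp hyK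
  have hyorth : ∀ β ∈ T, f β ⬝ᵥ y = 0 := by
    intro β hβ
    by_cases hval : lam β = lam β₀
    · rw [hy, dotProduct_sub, hproj, dot_sum_right]
      have h3 : ∀ γ ∈ T.filter fun γ => lam γ = lam β₀,
          f β ⬝ᵥ ((f γ ⬝ᵥ x) • f γ) = if γ = β then f β ⬝ᵥ x else 0 := by
        intro γ hγ
        simp only [Finset.mem_filter] at hγ
        rw [dotProduct_smul, smul_eq_mul, hf2 β hβ γ hγ.1]
        by_cases h : γ = β
        · simp [h]
        · rw [if_neg (fun hc => h hc.symm), if_neg h, mul_zero]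
      rw [Finset.sum_congr rfl h3, Finset.sum_ite_eq' (T.filter fun γ => lam γ = lam β₀) β
        (fun _ => f β ⬝ᵥ x), if_pos (Finset.mem_filter.mpr ⟨hβ, hval⟩), sub_self]
    · exact eig_orth S hS (hf1 β hβ) hyeig hval
  -- normalize
  refine ⟨(Real.sqrt (y ⬝ᵥ y))⁻¹ • y, ?_, ?_, ?_⟩
  · rw [Matrix.mulVec_smul, hyeig, smul_comm]
  · have hq : 0 < y ⬝ᵥ y := dot_self_pos hy0
    rw [smul_dotProduct, dotProduct_smul, smul_eq_mul, smul_eq_mul, ← mul_assoc,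
      ← mul_inv, Real.mul_self_sqrt hq.le]
    exact inv_mul_cancel₀ hq.ne'
  · intro β hβ
    rw [dotProduct_smul, hyorth β hβ, smul_zero]

end Step

section Ext

variable {p : ℕ}

lemma ext_aux (S : Matrix (Fin p) (Fin p) ℝ) (hS : S.IsSymm) (lam : Fin p → ℝ)
    (Q : Matrix (Fin p) (Fin p) ℝ) (hQ : Qᵀ * Q = 1) (hSQ : S = Q * Matrix.diagonal lam * Qᵀ) :
    ∀ (k : ℕ) (T : Finset (Fin p)) (f : Fin p → Fin p → ℝ),
    (Finset.univ \ T).card ≤ k →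
    (∀ β ∈ T, S *ᵥ f β = lam β • f β) →
    (∀ β ∈ T, ∀ γ ∈ T, f β ⬝ᵥ f γ = if β = γ then 1 else 0) →
    ∃ g : Fin p → Fin p → ℝ, (∀ β, S *ᵥ g β = lam β • g β) ∧
      (∀ β γ, g β ⬝ᵥ g γ = if β = γ then 1 else 0) ∧ (∀ β ∈ T, g β = f β) := by
  classical
  intro k
  induction k with
  | zero =>
    intro T f hcard hf1 hf2
    have hT : ∀ β, β ∈ T := by
      intro β
      by_contra hc
      have : β ∈ Finset.univ \ T := Finset.mem_sdiff.mpr ⟨Finset.mem_univ β, hc⟩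
      have := Finset.card_pos.mpr ⟨β, this⟩
      omega
    exact ⟨f, fun β => hf1 β (hT β), fun β γ => hf2 β (hT β) γ (hT γ), fun β _ => rfl⟩
  | succ k ih =>
    intro T f hcard hf1 hf2
    by_cases hful : Finset.univ \ T = ∅
    · refine ih T f ?_ hf1 hf2
      rw [hful]; simp
    · obtain ⟨β₀, hβ₀mem⟩ := Finset.nonempty_of_ne_empty hful
      have hβ₀ : β₀ ∉ T := (Finset.mem_sdiff.mp hβ₀mem).2
      obtain ⟨w, hw1, hw2, hw3⟩ := exists_orth_eigvec S hS lam Q hQ hSQ T f hf1 hf2 β₀ hβ₀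
      set f' : Fin p → Fin p → ℝ := Function.update f β₀ w with hf'
      have hf'eval : ∀ β ∈ T, f' β = f β := by
        intro β hβ
        have hne : β ≠ β₀ := fun hc => hβ₀ (hc ▸ hβ)
        rw [hf', Function.update_of_ne hne w f]
      have step1 : ∀ β ∈ insert β₀ T, S *ᵥ f' β = lam β • f' β := by
        intro β hβ
        rcases Finset.mem_insert.mp hβ with h | h
        · rw [h, hf', Function.update_self]; exact hw1
        · rw [hf'eval β h]; exact hf1 β h
      have step2 : ∀ β ∈ insert β₀ T, ∀ γ ∈ insert β₀ T, f' β ⬝ᵥ f' γ = if β = γ then 1 else 0 := by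
        intro β hβ γ hγ
        rcases Finset.mem_insert.mp hβ with h | h <;> rcases Finset.mem_insert.mp hγ with h' | h'
        · rw [h, h', if_pos rfl, hf', Function.update_self]; exact hw2
        · have hne : γ ≠ β₀ := fun hc => hβ₀ (hc ▸ h')
          rw [h, hf', Function.update_self, Function.update_of_ne hne w f,
            if_neg (Ne.symm hne), dotProduct_comm]
          exact hw3 γ h'
        · have hne : β ≠ β₀ := fun hc => hβ₀ (hc ▸ h)
          rw [h', hf', Function.update_of_ne hne w f, Function.update_self, if_neg hne]
          exact hw3 β h
        · rw [hf'eval β h, hf'eval γ h']; exact hf2 β h γ h'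
      have hcard' : (Finset.univ \ insert β₀ T).card ≤ k := by
        have h1 : Finset.univ \ insert β₀ T = (Finset.univ \ T).erase β₀ := by
          ext x
          simp only [Finset.mem_sdiff, Finset.mem_insert, Finset.mem_erase, Finset.mem_univ,
            true_and]
          tauto
        rw [h1]
        have := Finset.card_erase_of_mem hβ₀mem
        omega
      obtain ⟨g, hg1, hg2, hg3⟩ := ih (insert β₀ T) f' hcard' step1 step2
      exact ⟨g, hg1, hg2, fun β hβ => by
        rw [hg3 β (Finset.mem_insert_of_mem hβ), hf'eval β hβ]⟩

lemma ext_eigenbasis (S : Matrix (Fin p) (Fin p) ℝ) (hS : S.IsSymm) (lam : Fin p → ℝ)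
    (hspec : ∃ Q : Matrix (Fin p) (Fin p) ℝ, Qᵀ * Q = 1 ∧ S = Q * Matrix.diagonal lam * Qᵀ)
    (T : Finset (Fin p)) (f : Fin p → Fin p → ℝ)
    (hf1 : ∀ β ∈ T, S *ᵥ f β = lam β • f β)
    (hf2 : ∀ β ∈ T, ∀ γ ∈ T, f β ⬝ᵥ f γ = if β = γ then 1 else 0) :
    ∃ g : Fin p → Fin p → ℝ, (∀ β, S *ᵥ g β = lam β • g β) ∧
      (∀ β γ, g β ⬝ᵥ g γ = if β = γ then 1 else 0) ∧ (∀ β ∈ T, g β = f β) := by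
  obtain ⟨Q, hQ, hSQ⟩ := hspec
  exact ext_aux S hS lam Q hQ hSQ (Finset.univ \ T).card T f le_rfl hf1 hf2

end Ext

section Frob

variable {p : ℕ}

lemma sq_sum_eq_trace (M : Matrix (Fin p) (Fin p) ℝ) :
    ∑ i, ∑ j, M i j ^ 2 = Matrix.trace (Mᵀ * M) := by
  rw [Matrix.trace]
  rw [Finset.sum_comm]
  apply Finset.sum_congr rfl
  intro j _
  rw [Matrix.diag_apply, Matrix.mul_apply]
  exact Finset.sum_congr rfl fun i _ => by rw [Matrix.transpose_apply]; ring

lemma frob_sq_conj (W B E : Matrix (Fin p) (Fin p) ℝ) (hW : W * Wᵀ = 1) (hB : B * Bᵀ = 1) :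
    ∑ α, ∑ β, (Wᵀ * E * B) α β ^ 2 = ∑ i, ∑ j, E i j ^ 2 := by
  rw [sq_sum_eq_trace, sq_sum_eq_trace]
  have h1 : (Wᵀ * E * B)ᵀ * (Wᵀ * E * B) = Bᵀ * ((Eᵀ * (W * Wᵀ) * E) * B) := by
    rw [Matrix.transpose_mul, Matrix.transpose_mul, Matrix.transpose_transpose]
    noncomm_ring
  rw [h1, hW, Matrix.mul_one, Matrix.trace_mul_comm, Matrix.mul_assoc, hB, Matrix.mul_one]

end Frob

section Core

lemma core (p r s : ℕ) (hrs : r ≤ s) (a b : Fin p → ℝ) (M : Matrix (Fin p) (Fin p) ℝ)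
    (hM0 : ∀ α β, 0 ≤ M α β) (hrow : ∀ α, ∑ β, M α β = 1) (hcol : ∀ β, ∑ α, M α β = 1)
    (amono : ∀ α γ : Fin p, α.1 ≤ γ.1 → a γ ≤ a α)
    (t lr ls : ℝ) (ht : 0 < t)
    (hbIn : ∀ β : Fin p, r ≤ β.1 + 1 → β.1 + 1 ≤ s → ls ≤ b β ∧ b β ≤ lr)
    (hbH : ∀ β : Fin p, β.1 + 1 < r → lr + 2 * t ≤ b β)
    (hbL : ∀ β : Fin p, s < β.1 + 1 → b β ≤ ls - 2 * t) :
    t ^ 2 * ∑ α ∈ Finset.univ.filter (fun α : Fin p => ¬(r ≤ α.1 + 1 ∧ α.1 + 1 ≤ s)),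
        ∑ β ∈ Finset.univ.filter (fun β : Fin p => r ≤ β.1 + 1 ∧ β.1 + 1 ≤ s), M α β
      ≤ ∑ α, ∑ β, (a α - b β) ^ 2 * M α β := by
  classical
  set Hs : Finset (Fin p) := Finset.univ.filter (fun α : Fin p => α.1 + 1 < r) with hHs
  set Is : Finset (Fin p) := Finset.univ.filter (fun α : Fin p => r ≤ α.1 + 1 ∧ α.1 + 1 ≤ s)
    with hIs
  set Ls : Finset (Fin p) := Finset.univ.filter (fun α : Fin p => s < α.1 + 1) with hLs
  have hsplit : ∀ f : Fin p → ℝ,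
      Finset.univ.sum f = Hs.sum f + Is.sum f + Ls.sum f := by
    intro f
    rw [← Finset.sum_filter_add_sum_filter_not Finset.univ (fun α : Fin p => α.1 + 1 < r) f]
    have h2 := Finset.sum_filter_add_sum_filter_not
      (Finset.univ.filter (fun α : Fin p => ¬ α.1 + 1 < r)) (fun α : Fin p => α.1 + 1 ≤ s) f
    have e1 : (Finset.univ.filter (fun α : Fin p => ¬ α.1 + 1 < r)).filter
        (fun α : Fin p => α.1 + 1 ≤ s) = Is := by
      ext α; simp only [hIs, Finset.mem_filter, Finset.mem_univ, true_and]; omega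
    have e2 : (Finset.univ.filter (fun α : Fin p => ¬ α.1 + 1 < r)).filter
        (fun α : Fin p => ¬ α.1 + 1 ≤ s) = Ls := by
      ext α; simp only [hLs, Finset.mem_filter, Finset.mem_univ, true_and]; omega
    rw [e1, e2] at h2
    rw [← h2, add_assoc]
  have hOsplit : ∀ f : Fin p → ℝ,
      (Finset.univ.filter (fun α : Fin p => ¬(r ≤ α.1 + 1 ∧ α.1 + 1 ≤ s))).sum f
        = Hs.sum f + Ls.sum f := by
    intro f
    have h2 := Finset.sum_filter_add_sum_filter_not
      (Finset.univ.filter (fun α : Fin p => ¬(r ≤ α.1 + 1 ∧ α.1 + 1 ≤ s)))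
      (fun α : Fin p => α.1 + 1 < r) f
    have e1 : (Finset.univ.filter (fun α : Fin p => ¬(r ≤ α.1 + 1 ∧ α.1 + 1 ≤ s))).filter
        (fun α : Fin p => α.1 + 1 < r) = Hs := by
      ext α; simp only [hHs, Finset.mem_filter, Finset.mem_univ, true_and]; omega
    have e2 : (Finset.univ.filter (fun α : Fin p => ¬(r ≤ α.1 + 1 ∧ α.1 + 1 ≤ s))).filter
        (fun α : Fin p => ¬ α.1 + 1 < r) = Ls := by
      ext α; simp only [hLs, Finset.mem_filter, Finset.mem_univ, true_and]; omega
    rw [e1, e2] at h2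
    exact h2.symm
  -- masses
  set m : Finset (Fin p) → Finset (Fin p) → ℝ := fun A B => ∑ α ∈ A, ∑ β ∈ B, M α β with hm
  have hm0' : ∀ A B, 0 ≤ m A B := fun A B =>
    Finset.sum_nonneg fun α _ => Finset.sum_nonneg fun β _ => hM0 α β
  have hmrow : ∀ A, m A Finset.univ = A.card := by
    intro A
    simp only [hm]
    simp only [hrow]
    simp
  have hmcol : ∀ B, m Finset.univ B = B.card := by
    intro A
    simp only [hm]
    rw [show ∑ α, ∑ β ∈ A, M α β = ∑ β ∈ A, ∑ α, M α β from Finset.sum_comm]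
    simp only [hcol]
    simp
  have hrowsplit : ∀ A, m A Finset.univ = m A Hs + m A Is + m A Ls := by
    intro A
    simp only [hm]
    simp only [← Finset.sum_add_distrib]
    exact Finset.sum_congr rfl fun α _ => hsplit (fun β => M α β)
  have hcolsplit : ∀ B, m Finset.univ B = m Hs B + m Is B + m Ls B := fun B =>
    hsplit (fun α => ∑ β ∈ B, M α β)
  have balH : m Hs Is + m Hs Ls = m Is Hs + m Ls Hs := by
    have h1 := (hrowsplit Hs).symm.trans ((hmrow Hs).trans ((hmcol Hs).symm.trans (hcolsplit Hs)))
    linarith [h1]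
  have balL : m Ls Hs + m Ls Is = m Hs Ls + m Is Ls := by
    have h1 := (hrowsplit Ls).symm.trans ((hmrow Ls).trans ((hmcol Ls).symm.trans (hcolsplit Ls)))
    linarith [h1]
  have balI : m Is Hs + m Is Ls = m Hs Is + m Ls Is := by
    have h1 := (hrowsplit Is).symm.trans ((hmrow Is).trans ((hmcol Is).symm.trans (hcolsplit Is)))
    linarith [h1]
  -- cost blocks
  set C : Finset (Fin p) → Finset (Fin p) → ℝ :=
    fun A B => ∑ α ∈ A, ∑ β ∈ B, (a α - b β) ^ 2 * M α β with hC
  have hC0 : ∀ A B, 0 ≤ C A B := fun A B =>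
    Finset.sum_nonneg fun α _ => Finset.sum_nonneg fun β _ =>
      mul_nonneg (sq_nonneg _) (hM0 α β)
  have hcost : ∑ α, ∑ β, (a α - b β) ^ 2 * M α β
      = C Hs Hs + C Hs Is + C Hs Ls + (C Is Hs + C Is Is + C Is Ls)
        + (C Ls Hs + C Ls Is + C Ls Ls) := by
    rw [hsplit (fun α => ∑ β, (a α - b β) ^ 2 * M α β)]
    have h1 : ∀ A, (∑ α ∈ A, ∑ β, (a α - b β) ^ 2 * M α β) = C A Hs + C A Is + C A Ls := by
      intro A
      simp only [hC]
      simp only [← Finset.sum_add_distrib]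
      exact Finset.sum_congr rfl fun α _ => hsplit (fun β => (a α - b β) ^ 2 * M α β)
    rw [h1, h1, h1]
  have blockbound : ∀ A B, (∀ α ∈ A, ∀ β ∈ B, t ^ 2 ≤ (a α - b β) ^ 2) →
      t ^ 2 * m A B ≤ C A B := by
    intro A B h
    simp only [hm, hC]
    rw [Finset.mul_sum]
    refine Finset.sum_le_sum fun α hα => ?_
    rw [Finset.mul_sum]
    exact Finset.sum_le_sum fun β hβ => mul_le_mul_of_nonneg_right (h α hα β hβ) (hM0 α β)
  have sqge : ∀ x : ℝ, t ≤ x → t ^ 2 ≤ x ^ 2 := fun x hx => pow_le_pow_left₀ ht.le hx 2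
  have sqge' : ∀ x : ℝ, t ≤ -x → t ^ 2 ≤ x ^ 2 := by
    intro x hx
    rw [← neg_sq x]
    exact pow_le_pow_left₀ ht.le hx 2
  have memH : ∀ {β : Fin p}, β ∈ Hs → β.1 + 1 < r := by
    intro β hβ; rw [hHs] at hβ; exact (Finset.mem_filter.mp hβ).2
  have memI : ∀ {β : Fin p}, β ∈ Is → r ≤ β.1 + 1 ∧ β.1 + 1 ≤ s := by
    intro β hβ; rw [hIs] at hβ; exact (Finset.mem_filter.mp hβ).2
  have memL : ∀ {β : Fin p}, β ∈ Ls → s < β.1 + 1 := by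
    intro β hβ; rw [hLs] at hβ; exact (Finset.mem_filter.mp hβ).2
  have eH : Hs.sum (fun α => ∑ β ∈ Is, M α β) = m Is Hs + m Hs Is - m Is Hs := by
    simp only [hm]; ring
  rw [hOsplit (fun α => ∑ β ∈ Is, M α β), hcost]
  have eHI : Hs.sum (fun α => ∑ β ∈ Is, M α β) = m Hs Is := by simp only [hm]
  have eLI : Ls.sum (fun α => ∑ β ∈ Is, M α β) = m Ls Is := by simp only [hm]
  rw [eHI, eLI]
  have expand : ∀ x y : ℝ, t ^ 2 * (x + y) = t ^ 2 * x + t ^ 2 * y := fun x y => by ring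
  rw [expand]
  by_cases hPH : ∃ α : Fin p, α.1 + 1 < r ∧ a α < lr + t
  · obtain ⟨α₁, hα₁r, hα₁a⟩ := hPH
    by_cases hPL : ∃ α : Fin p, s < α.1 + 1 ∧ ls - t < a α
    · -- both sides collapsed: pay on Is × (Hs ∪ Ls)
      obtain ⟨α₂, hα₂s, hα₂a⟩ := hPL
      have haIs : ∀ α ∈ Is, ls - t < a α ∧ a α < lr + t := by
        intro α hα
        obtain ⟨h1, h2⟩ := memI hα
        exact ⟨lt_of_lt_of_le hα₂a (amono α α₂ (by omega)),
          lt_of_le_of_lt (amono α₁ α (by omega)) hα₁a⟩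
      have bIH : t ^ 2 * m Is Hs ≤ C Is Hs := by
        refine blockbound _ _ fun α hα β hβ => sqge' _ ?_
        have h1 := hbH β (memH hβ)
        have h2 := (haIs α hα).2
        linarith
      have bIL : t ^ 2 * m Is Ls ≤ C Is Ls := by
        refine blockbound _ _ fun α hα β hβ => sqge _ ?_
        have h1 := hbL β (memL hβ)
        have h2 := (haIs α hα).1
        linarith
      have expand2 : t ^ 2 * m Hs Is + t ^ 2 * m Ls Is = t ^ 2 * (m Hs Is + m Ls Is) := by ring
      have expand3 : t ^ 2 * (m Is Hs + m Is Ls) = t ^ 2 * m Is Hs + t ^ 2 * m Is Ls := by ring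
      have hbal : t ^ 2 * (m Hs Is + m Ls Is) = t ^ 2 * (m Is Hs + m Is Ls) := by rw [balI]
      linarith [hC0 Hs Hs, hC0 Hs Is, hC0 Hs Ls, hC0 Is Is, hC0 Ls Hs, hC0 Ls Is, hC0 Ls Ls]
    · -- low side honest, high side collapsed: pay on Ls × Is, Is × Hs, Ls × Hs
      push_neg at hPL
      have haIL : ∀ α : Fin p, r ≤ α.1 + 1 → a α < lr + t := fun α h =>
        lt_of_le_of_lt (amono α₁ α (by omega)) hα₁a
      have bLI : t ^ 2 * m Ls Is ≤ C Ls Is := by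
        refine blockbound _ _ fun α hα β hβ => sqge' _ ?_
        have h1 := (hbIn β (memI hβ).1 (memI hβ).2).1
        have h2 := hPL α (memL hα)
        linarith
      have bIH : t ^ 2 * m Is Hs ≤ C Is Hs := by
        refine blockbound _ _ fun α hα β hβ => sqge' _ ?_
        have h1 := hbH β (memH hβ)
        have h2 := haIL α (memI hα).1
        linarith
      have bLH : t ^ 2 * m Ls Hs ≤ C Ls Hs := by
        refine blockbound _ _ fun α hα β hβ => sqge' _ ?_
        have h1 := hbH β (memH hβ)
        have h2 := haIL α (by have := memL hα; omega)
        linarith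
      have hbal : t ^ 2 * m Hs Is ≤ t ^ 2 * m Is Hs + t ^ 2 * m Ls Hs := by
        have h1 : m Hs Is ≤ m Is Hs + m Ls Hs := by linarith [balH, hm0' Hs Ls]
        nlinarith [sq_nonneg t]
      linarith [hC0 Hs Hs, hC0 Hs Is, hC0 Hs Ls, hC0 Is Is, hC0 Is Ls, hC0 Ls Ls]
  · push_neg at hPH
    by_cases hPL : ∃ α : Fin p, s < α.1 + 1 ∧ ls - t < a α
    · -- high side honest, low side collapsed: pay on Hs × Is, Is × Ls, Hs × Ls
      obtain ⟨α₂, hα₂s, hα₂a⟩ := hPL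
      have haIH : ∀ α : Fin p, α.1 + 1 ≤ s → ls - t < a α := fun α h =>
        lt_of_lt_of_le hα₂a (amono α α₂ (by omega))
      have bHI : t ^ 2 * m Hs Is ≤ C Hs Is := by
        refine blockbound _ _ fun α hα β hβ => sqge _ ?_
        have h1 := (hbIn β (memI hβ).1 (memI hβ).2).2
        have h2 := hPH α (memH hα)
        linarith
      have bIL : t ^ 2 * m Is Ls ≤ C Is Ls := by
        refine blockbound _ _ fun α hα β hβ => sqge _ ?_
        have h1 := hbL β (memL hβ)
        have h2 := haIH α (memI hα).2
        linarith
      have bHL : t ^ 2 * m Hs Ls ≤ C Hs Ls := by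
        refine blockbound _ _ fun α hα β hβ => sqge _ ?_
        have h1 := hbL β (memL hβ)
        have h2 := haIH α (by have := memH hα; omega)
        linarith
      have hbal : t ^ 2 * m Ls Is ≤ t ^ 2 * m Hs Ls + t ^ 2 * m Is Ls := by
        have h1 : m Ls Is ≤ m Hs Ls + m Is Ls := by linarith [balL, hm0' Ls Hs]
        nlinarith [sq_nonneg t]
      linarith [hC0 Hs Hs, hC0 Hs Ls, hC0 Is Hs, hC0 Is Is, hC0 Ls Hs, hC0 Ls Is, hC0 Ls Ls]
    · -- no collapse: pay on (Hs ∪ Ls) × Is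
      push_neg at hPL
      have bHI : t ^ 2 * m Hs Is ≤ C Hs Is := by
        refine blockbound _ _ fun α hα β hβ => sqge _ ?_
        have h1 := (hbIn β (memI hβ).1 (memI hβ).2).2
        have h2 := hPH α (memH hα)
        linarith
      have bLI : t ^ 2 * m Ls Is ≤ C Ls Is := by
        refine blockbound _ _ fun α hα β hβ => sqge' _ ?_
        have h1 := (hbIn β (memI hβ).1 (memI hβ).2).1
        have h2 := hPL α (memL hα)
        linarith
      linarith [hC0 Hs Hs, hC0 Hs Ls, hC0 Is Hs, hC0 Is Is, hC0 Is Ls, hC0 Ls Hs, hC0 Ls Ls]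

end Core

theorem stmt1
    (p r s d : ℕ) (hr : 1 ≤ r) (hrs : r ≤ s) (hsp : s ≤ p) (hd : d = s - r + 1)
    (lam lamh : ℕ → ℝ)
    (hmono : ∀ i j, 1 ≤ i → i ≤ j → j ≤ p → lam j ≤ lam i)
    (hmonoh : ∀ i j, 1 ≤ i → i ≤ j → j ≤ p → lamh j ≤ lamh i)
    (S Sh : Matrix (Fin p) (Fin p) ℝ) (hSsymm : S.IsSymm) (hShsymm : Sh.IsSymm)
    (hSspec : ∃ Q : Matrix (Fin p) (Fin p) ℝ, Qᵀ * Q = 1 ∧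
      S = Q * Matrix.diagonal (fun i : Fin p => lam (i.1 + 1)) * Qᵀ)
    (hShspec : ∃ Q : Matrix (Fin p) (Fin p) ℝ, Qᵀ * Q = 1 ∧
      Sh = Q * Matrix.diagonal (fun i : Fin p => lamh (i.1 + 1)) * Qᵀ)
    (δ : ℝ) (hδ : 0 < δ)
    (hgapr : 1 < r → δ ≤ lam (r - 1) - lam r)
    (hgaps : s < p → δ ≤ lam s - lam (s + 1))
    (V Vh : Matrix (Fin p) (Fin d) ℝ) (hV : Vᵀ * V = 1) (hVh : Vhᵀ * Vh = 1)
    (hVeig : ∀ j : Fin d, S.mulVec (fun i => V i j) = lam (r + j.1) • (fun i => V i j))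
    (hVheig : ∀ j : Fin d, Sh.mulVec (fun i => Vh i j) = lamh (r + j.1) • (fun i => Vh i j)) :
    Real.sqrt ((d : ℝ) - (frobNorm (Vhᵀ * V)) ^ 2) ≤ 2 * frobNorm (Sh - S) / δ := by
  classical
  have hdpos : 0 < d := by omega
  have hppos : 0 < p := by omega
  set lamb : Fin p → ℝ := fun β => lam (β.1 + 1) with hlamb
  set lambh : Fin p → ℝ := fun β => lamh (β.1 + 1) with hlambh
  set Iset : Finset (Fin p) :=
    Finset.univ.filter (fun β : Fin p => r ≤ β.1 + 1 ∧ β.1 + 1 ≤ s) with hIset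
  set posd : Fin d → Fin p := fun j => ⟨r - 1 + j.1, by have := j.2; omega⟩ with hposd
  set jof : Fin p → Fin d := fun β => if h : r - 1 ≤ β.1 ∧ β.1 ≤ s - 1
    then ⟨β.1 - (r - 1), by omega⟩ else ⟨0, hdpos⟩ with hjof
  -- the seed families
  set f : Fin p → Fin p → ℝ := fun β i =>
    if r - 1 ≤ β.1 ∧ β.1 ≤ s - 1 then V i (jof β) else 0 with hf
  set fh : Fin p → Fin p → ℝ := fun β i =>
    if r - 1 ≤ β.1 ∧ β.1 ≤ s - 1 then Vh i (jof β) else 0 with hfh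
  have memIset : ∀ {β : Fin p}, β ∈ Iset ↔ (r - 1 ≤ β.1 ∧ β.1 ≤ s - 1) := by
    intro β
    rw [hIset]
    simp only [Finset.mem_filter, Finset.mem_univ, true_and]
    omega
  have hfcol : ∀ β ∈ Iset, f β = fun i => V i (jof β) := by
    intro β hβ
    funext i
    simp only [hf]
    rw [if_pos (memIset.mp hβ)]
  have hfhcol : ∀ β ∈ Iset, fh β = fun i => Vh i (jof β) := by
    intro β hβ
    funext i
    simp only [hfh]
    rw [if_pos (memIset.mp hβ)]
  have hposval : ∀ β ∈ Iset, β.1 + 1 = r + (jof β).1 := by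
    intro β hβ
    have h1 := memIset.mp hβ
    simp only [hjof, dif_pos h1]
    omega
  have hjof_inj : ∀ β ∈ Iset, ∀ γ ∈ Iset, (jof β = jof γ ↔ β = γ) := by
    intro β hβ γ hγ
    have h1 := memIset.mp hβ
    have h2 := memIset.mp hγ
    simp only [hjof, dif_pos h1, dif_pos h2]
    constructor
    · intro h
      have h3 : β.1 - (r - 1) = γ.1 - (r - 1) := congrArg Fin.val h
      exact Fin.ext (by omega)
    · intro h
      exact Fin.ext (by simp [h])
  -- orthonormality of seeds
  have hVdot : ∀ (U : Matrix (Fin p) (Fin d) ℝ), Uᵀ * U = 1 → ∀ β ∈ Iset, ∀ γ ∈ Iset,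
      (fun i => U i (jof β)) ⬝ᵥ (fun i => U i (jof γ)) = if β = γ then (1:ℝ) else 0 := by
    intro U hU β hβ γ hγ
    have h1 : (Uᵀ * U) (jof β) (jof γ) = (1 : Matrix (Fin d) (Fin d) ℝ) (jof β) (jof γ) := by
      rw [hU]
    rw [Matrix.mul_apply] at h1
    simp only [Matrix.transpose_apply, Matrix.one_apply] at h1
    rw [show ((fun i => U i (jof β)) ⬝ᵥ fun i => U i (jof γ)) =
      ∑ k, U k (jof β) * U k (jof γ) from rfl, h1]
    by_cases h : β = γ
    · rw [if_pos h, if_pos ((hjof_inj β hβ γ hγ).mpr h)]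
    · rw [if_neg h, if_neg (fun hc => h ((hjof_inj β hβ γ hγ).mp hc))]
  -- extend to full eigenbases
  obtain ⟨g, hg1, hg2, hg3⟩ := ext_eigenbasis S hSsymm lamb
    (by obtain ⟨Q, h1, h2⟩ := hSspec; exact ⟨Q, h1, h2⟩) Iset f
    (by
      intro β hβ
      rw [hfcol β hβ]
      have h2 := hVeig (jof β)
      have h3 : lamb β = lam (r + (jof β).1) := congrArg lam (hposval β hβ)
      rw [h3]
      exact h2)
    (by
      intro β hβ γ hγ
      rw [hfcol β hβ, hfcol γ hγ]
      exact hVdot V hV β hβ γ hγ)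
  obtain ⟨gh, hgh1, hgh2, hgh3⟩ := ext_eigenbasis Sh hShsymm lambh
    (by obtain ⟨Q, h1, h2⟩ := hShspec; exact ⟨Q, h1, h2⟩) Iset fh
    (by
      intro β hβ
      rw [hfhcol β hβ]
      have h2 := hVheig (jof β)
      have h3 : lambh β = lamh (r + (jof β).1) := congrArg lamh (hposval β hβ)
      rw [h3]
      exact h2)
    (by
      intro β hβ γ hγ
      rw [hfhcol β hβ, hfhcol γ hγ]
      exact hVdot Vh hVh β hβ γ hγ)
  -- matrices of the bases
  set B : Matrix (Fin p) (Fin p) ℝ := Matrix.of fun i β => g β i with hB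
  set W : Matrix (Fin p) (Fin p) ℝ := Matrix.of fun i α => gh α i with hW
  have hBo : Bᵀ * B = 1 := by
    ext β γ
    rw [Matrix.mul_apply]
    simp only [hB, Matrix.transpose_apply, Matrix.of_apply]
    rw [show ∑ k, g β k * g γ k = g β ⬝ᵥ g γ from rfl, hg2 β γ, Matrix.one_apply]
  have hWo : Wᵀ * W = 1 := by
    ext β γ
    rw [Matrix.mul_apply]
    simp only [hW, Matrix.transpose_apply, Matrix.of_apply]
    rw [show ∑ k, gh β k * gh γ k = gh β ⬝ᵥ gh γ from rfl, hgh2 β γ, Matrix.one_apply]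
  have hBo' : B * Bᵀ = 1 := mul_eq_one_comm.mp hBo
  have hWo' : W * Wᵀ = 1 := mul_eq_one_comm.mp hWo
  have hSB : S * B = B * Matrix.diagonal lamb := by
    ext i β
    rw [Matrix.mul_apply, Matrix.mul_diagonal]
    have h1 : (S *ᵥ g β) i = (lamb β • g β) i := by rw [hg1 β]
    simp only [Matrix.mulVec, dotProduct, Pi.smul_apply, smul_eq_mul] at h1
    simp only [hB, Matrix.of_apply]
    rw [h1]; ring
  have hShW : Sh * W = W * Matrix.diagonal lambh := by
    ext i α
    rw [Matrix.mul_apply, Matrix.mul_diagonal]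
    have h1 : (Sh *ᵥ gh α) i = (lambh α • gh α) i := by rw [hgh1 α]
    simp only [Matrix.mulVec, dotProduct, Pi.smul_apply, smul_eq_mul] at h1
    simp only [hW, Matrix.of_apply]
    rw [h1]; ring
  set X : Matrix (Fin p) (Fin p) ℝ := Wᵀ * B with hX
  have hXo : Xᵀ * X = 1 := by
    rw [hX, Matrix.transpose_mul, Matrix.transpose_transpose, Matrix.mul_assoc,
      ← Matrix.mul_assoc W, hWo', Matrix.one_mul, hBo]
  have hXo' : X * Xᵀ = 1 := mul_eq_one_comm.mp hXo
  have hrowsum : ∀ α, ∑ β, (X α β) ^ 2 = 1 := by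
    intro α
    have h1 : (X * Xᵀ) α α = (1 : Matrix (Fin p) (Fin p) ℝ) α α := by rw [hXo']
    rw [Matrix.mul_apply] at h1
    simp only [Matrix.transpose_apply, Matrix.one_apply_eq] at h1
    rw [← h1]
    exact Finset.sum_congr rfl fun β _ => (sq (X α β)).symm ▸ by ring
  have hcolsum : ∀ β, ∑ α, (X α β) ^ 2 = 1 := by
    intro β
    have h1 : (Xᵀ * X) β β = (1 : Matrix (Fin p) (Fin p) ℝ) β β := by rw [hXo]
    rw [Matrix.mul_apply] at h1
    simp only [Matrix.transpose_apply, Matrix.one_apply_eq] at h1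
    rw [← h1]
    exact Finset.sum_congr rfl fun α _ => by ring
  -- entry identity for the conjugated perturbation
  have hE : ∀ α β, (Wᵀ * (Sh - S) * B) α β = (lambh α - lamb β) * X α β := by
    have h1 : Wᵀ * (Sh - S) * B
        = Matrix.diagonal lambh * X - X * Matrix.diagonal lamb := by
      have h2 : Wᵀ * Sh = Matrix.diagonal lambh * Wᵀ := by
        have h3 := congrArg Matrix.transpose hShW
        rw [Matrix.transpose_mul, Matrix.transpose_mul, Matrix.diagonal_transpose,
          hShsymm] at h3
        exact h3
      rw [Matrix.mul_sub, Matrix.sub_mul, Matrix.mul_assoc Wᵀ S B, hSB,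
        ← Matrix.mul_assoc Wᵀ B (Matrix.diagonal lamb), ← hX, h2, Matrix.mul_assoc, ← hX]
    intro α β
    rw [h1, Matrix.sub_apply, Matrix.diagonal_mul, Matrix.mul_diagonal]
    ring
  have hfrob : ∑ α, ∑ β, (lambh α - lamb β) ^ 2 * (X α β) ^ 2 = ∑ i, ∑ j, (Sh - S) i j ^ 2 := by
    rw [← frob_sq_conj W B (Sh - S) hWo' hBo']
    refine Finset.sum_congr rfl fun α _ => Finset.sum_congr rfl fun β _ => ?_
    rw [hE α β]
    ring
  -- apply the core combinatorial inequality
  have hcore := core p r s hrs lambh lamb (fun α β => (X α β) ^ 2)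
    (fun α β => sq_nonneg _) hrowsum hcolsum
    (fun α γ h => hmonoh (α.1 + 1) (γ.1 + 1) (by omega) (by omega) (by have := γ.2; omega))
    (δ / 2) (lam r) (lam s) (by linarith)
    (fun β h1 h2 => ⟨hmono (β.1 + 1) s (by omega) h2 hsp,
      hmono r (β.1 + 1) hr h1 (by have := β.2; omega)⟩)
    (by
      intro β h
      have h1 := hgapr (by omega)
      have h2 := hmono (β.1 + 1) (r - 1) (by omega) (by omega) (by omega)
      show lam r + 2 * (δ / 2) ≤ lam (β.1 + 1)
      linarith)
    (by
      intro β h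
      have hβp := β.2
      have h1 := hgaps (by omega)
      have h2 := hmono (s + 1) (β.1 + 1) (by omega) (by omega) (by omega)
      show lam (β.1 + 1) ≤ lam s - 2 * (δ / 2)
      linarith)
  -- identify the left-hand mass with d - ‖Vhᵀ V‖²
  have hposd_mem : ∀ j : Fin d, posd j ∈ Iset := by
    intro j
    rw [memIset, hposd]
    have := j.2
    constructor <;> simp <;> omega
  have hposd_inj : Function.Injective posd := by
    intro j j' h
    have h1 : (posd j).1 = (posd j').1 := congrArg Fin.val h
    rw [hposd] at h1
    simp only at h1
    exact Fin.ext (by omega)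
  have hIset_eq : Iset = Finset.image posd Finset.univ := by
    ext β
    simp only [Finset.mem_image, Finset.mem_univ, true_and]
    constructor
    · intro hβ
      have h1 := memIset.mp hβ
      refine ⟨⟨β.1 - (r - 1), by omega⟩, ?_⟩
      rw [hposd]
      exact Fin.ext (by simp; omega)
    · rintro ⟨j, rfl⟩
      exact hposd_mem j
  have hcard : (Iset.card : ℝ) = (d : ℝ) := by
    rw [hIset_eq, Finset.card_image_of_injective _ hposd_inj]
    simp
  have hjof_posd : ∀ j : Fin d, jof (posd j) = j := by
    intro j
    have hj := j.2
    have h1 : r - 1 ≤ (posd j).1 ∧ (posd j).1 ≤ s - 1 := by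
      rw [hposd]; constructor <;> simp <;> omega
    rw [hjof]
    simp only [dif_pos h1]
    refine Fin.ext ?_
    simp only [hposd]
    omega
  have hXIn : ∀ j j' : Fin d, X (posd j) (posd j') = (Vhᵀ * V) j j' := by
    intro j j'
    rw [hX, Matrix.mul_apply, Matrix.mul_apply]
    refine Finset.sum_congr rfl fun i _ => ?_
    have h1 : g (posd j') = f (posd j') := hg3 _ (hposd_mem j')
    have h2 : gh (posd j) = fh (posd j) := hgh3 _ (hposd_mem j)
    simp only [Matrix.transpose_apply, hB, hW, Matrix.of_apply, h1, h2,
      hfcol _ (hposd_mem j'), hfhcol _ (hposd_mem j), hjof_posd]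
  have hInIn : ∑ β ∈ Iset, ∑ α ∈ Iset, (X α β) ^ 2 = frobNorm (Vhᵀ * V) ^ 2 := by
    have h1 : ∑ β ∈ Iset, ∑ α ∈ Iset, (X α β) ^ 2
        = ∑ j' : Fin d, ∑ j : Fin d, ((Vhᵀ * V) j j') ^ 2 := by
      rw [hIset_eq, Finset.sum_image (fun x _ y _ h => hposd_inj h)]
      refine Finset.sum_congr rfl fun j' _ => ?_
      rw [Finset.sum_image (fun x _ y _ h => hposd_inj h)]
      refine Finset.sum_congr rfl fun j _ => ?_
      rw [hXIn]
    rw [h1, Finset.sum_comm, frobNorm, Real.sq_sqrt]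
    exact Finset.sum_nonneg fun i _ => Finset.sum_nonneg fun j _ => sq_nonneg _
  have hmass : ∑ α ∈ Finset.univ.filter (fun α : Fin p => ¬(r ≤ α.1 + 1 ∧ α.1 + 1 ≤ s)),
      ∑ β ∈ Finset.univ.filter (fun β : Fin p => r ≤ β.1 + 1 ∧ β.1 + 1 ≤ s), (X α β) ^ 2
      = (d : ℝ) - frobNorm (Vhᵀ * V) ^ 2 := by
    have hfil : Finset.univ.filter (fun β : Fin p => r ≤ β.1 + 1 ∧ β.1 + 1 ≤ s) = Iset := by
      rw [hIset]
    rw [hfil, Finset.sum_comm]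
    have hout : ∀ β, ∑ α ∈ Finset.univ.filter (fun α : Fin p => ¬(r ≤ α.1 + 1 ∧ α.1 + 1 ≤ s)),
        (X α β) ^ 2 = 1 - ∑ α ∈ Iset, (X α β) ^ 2 := by
      intro β
      have h1 := Finset.sum_filter_add_sum_filter_not Finset.univ
        (fun α : Fin p => r ≤ α.1 + 1 ∧ α.1 + 1 ≤ s) (fun α => (X α β) ^ 2)
      rw [hfil] at h1
      have h2 := hcolsum β
      linarith
    rw [Finset.sum_congr rfl fun β _ => hout β, Finset.sum_sub_distrib, hInIn]
    simp [hcard]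
  -- frobenius norm of the perturbation
  have hEnn : (0:ℝ) ≤ ∑ i, ∑ j, (Sh - S) i j ^ 2 :=
    Finset.sum_nonneg fun i _ => Finset.sum_nonneg fun j _ => sq_nonneg _
  have hfrob2 : ∑ i, ∑ j, (Sh - S) i j ^ 2 = frobNorm (Sh - S) ^ 2 := by
    rw [frobNorm, Real.sq_sqrt hEnn]
  have key : (δ / 2) ^ 2 * ((d : ℝ) - frobNorm (Vhᵀ * V) ^ 2) ≤ frobNorm (Sh - S) ^ 2 := by
    rw [← hmass, ← hfrob2, ← hfrob]
    exact hcore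
  have hTnn : (0:ℝ) ≤ (d : ℝ) - frobNorm (Vhᵀ * V) ^ 2 := by
    rw [← hmass]
    exact Finset.sum_nonneg fun α _ => Finset.sum_nonneg fun β _ => sq_nonneg _
  have hF : 0 ≤ frobNorm (Sh - S) := Real.sqrt_nonneg _
  have hq : (0:ℝ) < (δ / 2) ^ 2 := by positivity
  have h2 : (d : ℝ) - frobNorm (Vhᵀ * V) ^ 2 ≤ (2 * frobNorm (Sh - S) / δ) ^ 2 := by
    rw [show (2 * frobNorm (Sh - S) / δ) ^ 2 = frobNorm (Sh - S) ^ 2 / (δ / 2) ^ 2 by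
      field_simp]
    rw [le_div_iff₀ hq]
    linarith [key]
  calc Real.sqrt ((d : ℝ) - frobNorm (Vhᵀ * V) ^ 2)
      ≤ Real.sqrt ((2 * frobNorm (Sh - S) / δ) ^ 2) := Real.sqrt_le_sqrt h2
    _ = 2 * frobNorm (Sh - S) / δ := Real.sqrt_sq (by positivity)
end

section
/- Let Σ, Σ̂ ∈ ℝ^{p×p} be symmetric matrices with eigenvalues λ₁ ≥ … ≥ λ_p and λ̂₁ ≥ … ≥ λ̂_p respectively, fix j ∈ {1, …, p}, and assume δ := min(λ_{j−1} − λ_j, λ_j − λ_{j+1}) > 0 (with λ₀ := ∞, λ_{p+1} := −∞). If the unit vectors v, v̂ ∈ ℝ^p satisfy Σv = λ_j v, Σ̂v̂ = λ̂_j v̂ and v̂ᵀv ≥ 0, then ‖v̂ − v‖ ≤ 2^{3/2} ‖Σ̂ − Σ‖_op / δ. -/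
open Matrix

lemma opNorm_nonneg' {p q : ℕ} (A : Matrix (Fin p) (Fin q) ℝ) : 0 ≤ opNorm A :=
  norm_nonneg _

lemma mulVec_sq_le {p q : ℕ} (A : Matrix (Fin p) (Fin q) ℝ) (x : Fin q → ℝ) :
    ∑ i, (A.mulVec x i) ^ 2 ≤ (opNorm A) ^ 2 * ∑ i, (x i) ^ 2 := by
  set X : EuclideanSpace ℝ (Fin q) := (WithLp.equiv 2 _).symm x with hX
  have h1 : ‖(LinearMap.toContinuousLinearMap (Matrix.toEuclideanLin A)) X‖
      ≤ opNorm A * ‖X‖ := ContinuousLinearMap.le_opNorm _ _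
  have h2 : (LinearMap.toContinuousLinearMap (Matrix.toEuclideanLin A)) X
      = (WithLp.equiv 2 (Fin p → ℝ)).symm (A.mulVec x) := by
    simp [hX, WithLp.equiv_symm_apply, Matrix.toEuclideanLin_toLp, Matrix.toLin'_apply]
  have hnx : ‖X‖ = Real.sqrt (∑ i, (x i) ^ 2) := by
    rw [EuclideanSpace.norm_eq]
    simp [hX, WithLp.equiv_symm_apply, PiLp.toLp_apply, Real.norm_eq_abs, sq_abs]
  have hny : ‖(WithLp.equiv 2 (Fin p → ℝ)).symm (A.mulVec x)‖
      = Real.sqrt (∑ i, (A.mulVec x i) ^ 2) := by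
    rw [EuclideanSpace.norm_eq]
    simp [WithLp.equiv_symm_apply, PiLp.toLp_apply, Real.norm_eq_abs, sq_abs]
  rw [h2, hny, hnx] at h1
  have hs1 : (0:ℝ) ≤ ∑ i, (A.mulVec x i)^2 := Finset.sum_nonneg fun i _ => sq_nonneg _
  have hs2 : (0:ℝ) ≤ ∑ i, (x i)^2 := Finset.sum_nonneg fun i _ => sq_nonneg _
  have := mul_self_le_mul_self (Real.sqrt_nonneg _) h1
  rw [Real.mul_self_sqrt hs1] at this
  calc ∑ i, (A.mulVec x i)^2 ≤ (opNorm A * Real.sqrt (∑ i, (x i)^2)) *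
        (opNorm A * Real.sqrt (∑ i, (x i)^2)) := this
    _ = (opNorm A)^2 * ∑ i, (x i)^2 := by
        rw [mul_mul_mul_comm, Real.mul_self_sqrt hs2]; ring

lemma sum_trunc {M : Type*} [AddCommMonoid M] {p j : ℕ} (hjp : j ≤ p) (f : Fin p → M)
    (hf : ∀ k : Fin p, j ≤ k.1 → f k = 0) :
    ∑ k, f k = ∑ l : Fin j, f (Fin.castLE hjp l) := by
  set F : ℕ → M := fun k => if h : k < p then f ⟨k, h⟩ else 0 with hF
  have h1 : ∑ k : Fin p, f k = ∑ k ∈ Finset.range p, F k := by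
    rw [← Fin.sum_univ_eq_sum_range F p]
    exact Finset.sum_congr rfl fun k _ => by simp [hF, k.2]
  have h2 : ∑ l : Fin j, f (Fin.castLE hjp l) = ∑ l ∈ Finset.range j, F l := by
    rw [← Fin.sum_univ_eq_sum_range F j]
    refine Finset.sum_congr rfl fun l _ => ?_
    have hl : l.1 < p := lt_of_lt_of_le l.2 hjp
    simp [hF, hl, Fin.castLE]
  rw [h1, h2]
  refine (Finset.sum_subset (Finset.range_subset_range.mpr hjp) fun k hk hk' => ?_).symm
  simp only [Finset.mem_range] at hk hk'
  simp only [hF, dif_pos hk]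
  exact hf ⟨k, hk⟩ (le_of_not_gt hk')

lemma orth_dot {p : ℕ} {Q : Matrix (Fin p) (Fin p) ℝ} (hQ : Qᵀ * Q = 1) (x y : Fin p → ℝ) :
    (Q *ᵥ x) ⬝ᵥ (Q *ᵥ y) = x ⬝ᵥ y := by
  rw [dotProduct_mulVec, ← vecMul_transpose, vecMul_vecMul, hQ, vecMul_one]

lemma orth_dot' {p : ℕ} {Q : Matrix (Fin p) (Fin p) ℝ} (hQ : Qᵀ * Q = 1) (x y : Fin p → ℝ) :
    (Qᵀ *ᵥ x) ⬝ᵥ (Qᵀ *ᵥ y) = x ⬝ᵥ y := by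
  have h : Qᵀᵀ * Qᵀ = 1 := by
    rw [transpose_transpose]
    exact mul_eq_one_comm.mp hQ
  exact orth_dot h x y

lemma quad_form {p : ℕ} {Q : Matrix (Fin p) (Fin p) ℝ} (d : Fin p → ℝ) (x : Fin p → ℝ) :
    x ⬝ᵥ ((Q * Matrix.diagonal d * Qᵀ) *ᵥ x)
      = ∑ i, d i * ((Qᵀ *ᵥ x) i * (Qᵀ *ᵥ x) i) := by
  rw [← mulVec_mulVec, ← mulVec_mulVec, dotProduct_mulVec, ← mulVec_transpose]
  rw [dotProduct, Finset.sum_congr rfl]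
  intro i _
  rw [mulVec_diagonal]
  ring

lemma weyl_aux_s4 (p j : ℕ) (hj1 : 1 ≤ j) (hjp : j ≤ p)
    (lam lamh : ℕ → ℝ)
    (hmono : ∀ i j, 1 ≤ i → i ≤ j → j ≤ p → lam j ≤ lam i)
    (hmonoh : ∀ i j, 1 ≤ i → i ≤ j → j ≤ p → lamh j ≤ lamh i)
    (Q Qh : Matrix (Fin p) (Fin p) ℝ) (hQ : Qᵀ * Q = 1) (hQh : Qhᵀ * Qh = 1)
    (ε : ℝ)
    (hE : ∀ x : Fin p → ℝ, |x ⬝ᵥ ((Qh * Matrix.diagonal (fun i : Fin p => lamh (i.1+1)) * Qhᵀ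
          - Q * Matrix.diagonal (fun i : Fin p => lam (i.1+1)) * Qᵀ) *ᵥ x)| ≤ ε * (x ⬝ᵥ x)) :
    lam j ≤ lamh j + ε := by
  have hQQ : Q * Qᵀ = 1 := mul_eq_one_comm.mp hQ
  set N : Matrix (Fin (j-1)) (Fin j) ℝ :=
    Matrix.of (fun i l => (Qhᵀ * Q) ⟨i.1, by omega⟩ ⟨l.1, by omega⟩) with hN
  have hker : LinearMap.ker N.mulVecLin ≠ ⊥ := by
    apply LinearMap.ker_ne_bot_of_finrank_lt
    rw [Module.finrank_fin_fun, Module.finrank_fin_fun]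
    omega
  obtain ⟨a, haker, ha0⟩ := (Submodule.ne_bot_iff _).mp hker
  have haN : N *ᵥ a = 0 := haker
  set ab : Fin p → ℝ := fun i => if h : i.1 < j then a ⟨i.1, h⟩ else 0 with hab
  set x : Fin p → ℝ := Q *ᵥ ab with hx
  have hQtx : Qᵀ *ᵥ x = ab := by
    rw [hx, mulVec_mulVec, hQ, one_mulVec]
  have hA_pos : 0 < ab ⬝ᵥ ab := by
    obtain ⟨l, hl⟩ := Function.ne_iff.mp ha0
    refine Finset.sum_pos' (fun i _ => mul_self_nonneg _) ⟨⟨l.1, lt_of_lt_of_le l.2 hjp⟩,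
      Finset.mem_univ _, ?_⟩
    have : ab ⟨l.1, lt_of_lt_of_le l.2 hjp⟩ = a l := by
      simp [hab, l.2]
    rw [this]
    exact mul_self_pos.mpr (by simpa using hl)
  have hxx : x ⬝ᵥ x = ab ⬝ᵥ ab := orth_dot hQ ab ab
  have hS : x ⬝ᵥ ((Q * Matrix.diagonal (fun i : Fin p => lam (i.1+1)) * Qᵀ) *ᵥ x)
      = ∑ i, lam (i.1+1) * (ab i * ab i) := by
    rw [quad_form, hQtx]
  have hSlow : lam j * (ab ⬝ᵥ ab) ≤ ∑ i, lam (i.1+1) * (ab i * ab i) := by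
    rw [dotProduct, Finset.mul_sum]
    refine Finset.sum_le_sum fun i _ => ?_
    by_cases h : i.1 < j
    · exact mul_le_mul_of_nonneg_right (hmono (i.1+1) j (by omega) (by omega) hjp)
        (mul_self_nonneg _)
    · have : ab i = 0 := by simp [hab, h]
      simp [this]
  set c : Fin p → ℝ := Qhᵀ *ᵥ x with hc
  have hc0 : ∀ i : Fin p, i.1 + 1 < j → c i = 0 := by
    intro i hi
    have h1 : c i = ((Qhᵀ * Q) *ᵥ ab) i := by rw [hc, hx, mulVec_mulVec]
    rw [h1]
    have hsum : ((Qhᵀ * Q) *ᵥ ab) i = ∑ k : Fin p, (Qhᵀ * Q) i k * ab k := rfl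
    rw [hsum, sum_trunc hjp (fun k => (Qhᵀ * Q) i k * ab k)
      (fun k hk => by simp [hab, Nat.not_lt.mpr hk])]
    have h2 : ∀ l : Fin j, (Qhᵀ * Q) i (Fin.castLE hjp l) * ab (Fin.castLE hjp l)
        = N ⟨i.1, by omega⟩ l * a l := by
      intro l
      have hl : (Fin.castLE hjp l).1 < j := l.2
      have h3 : ab (Fin.castLE hjp l) = a l := by simp [hab, hl, Fin.castLE]
      rw [h3, hN]
      congr 1
    rw [Finset.sum_congr rfl (fun l _ => h2 l)]
    have := congrFun haN ⟨i.1, by omega⟩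
    simpa [mulVec, dotProduct] using this
  have hcc : ∑ i, c i * c i = ab ⬝ᵥ ab := by
    have := orth_dot' hQh x x
    rw [show (∑ i, c i * c i) = c ⬝ᵥ c from rfl, this, hxx]
  have hSh : x ⬝ᵥ ((Qh * Matrix.diagonal (fun i : Fin p => lamh (i.1+1)) * Qhᵀ) *ᵥ x)
      = ∑ i, lamh (i.1+1) * (c i * c i) := by
    rw [quad_form, ← hc]
  have hShup : ∑ i, lamh (i.1+1) * (c i * c i) ≤ lamh j * (ab ⬝ᵥ ab) := by
    rw [← hcc, Finset.mul_sum]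
    refine Finset.sum_le_sum fun i _ => ?_
    by_cases h : i.1 + 1 < j
    · simp [hc0 i h]
    · exact mul_le_mul_of_nonneg_right (hmonoh j (i.1+1) hj1 (by omega) (by omega))
        (mul_self_nonneg _)
  have hEx := hE x
  have hsplit : x ⬝ᵥ ((Qh * Matrix.diagonal (fun i : Fin p => lamh (i.1+1)) * Qhᵀ
        - Q * Matrix.diagonal (fun i : Fin p => lam (i.1+1)) * Qᵀ) *ᵥ x)
      = ∑ i, lamh (i.1+1) * (c i * c i) - ∑ i, lam (i.1+1) * (ab i * ab i) := by
    rw [sub_mulVec, dotProduct_sub, hSh, hS]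
  rw [hsplit, hxx] at hEx
  have h1 : lam j * (ab ⬝ᵥ ab) - ε * (ab ⬝ᵥ ab) ≤ lamh j * (ab ⬝ᵥ ab) := by
    have h2 := (abs_le.mp hEx).1
    nlinarith [hSlow, hShup]
  have := (mul_le_mul_iff_left₀ hA_pos).mp
    (by linarith : (lam j - ε) * (ab ⬝ᵥ ab) ≤ lamh j * (ab ⬝ᵥ ab))
  linarith

set_option maxHeartbeats 1000000 in
theorem stmt4
    (p j : ℕ) (hj1 : 1 ≤ j) (hjp : j ≤ p)
    (lam lamh : ℕ → ℝ)
    (hmono : ∀ i j, 1 ≤ i → i ≤ j → j ≤ p → lam j ≤ lam i)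
    (hmonoh : ∀ i j, 1 ≤ i → i ≤ j → j ≤ p → lamh j ≤ lamh i)
    (S Sh : Matrix (Fin p) (Fin p) ℝ) (hSsymm : S.IsSymm) (hShsymm : Sh.IsSymm)
    (hSspec : ∃ Q : Matrix (Fin p) (Fin p) ℝ, Qᵀ * Q = 1 ∧
      S = Q * Matrix.diagonal (fun i : Fin p => lam (i.1 + 1)) * Qᵀ)
    (hShspec : ∃ Q : Matrix (Fin p) (Fin p) ℝ, Qᵀ * Q = 1 ∧
      Sh = Q * Matrix.diagonal (fun i : Fin p => lamh (i.1 + 1)) * Qᵀ)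
    (δ : ℝ) (hδ : 0 < δ)
    (hgapl : 1 < j → δ ≤ lam (j - 1) - lam j)
    (hgapu : j < p → δ ≤ lam j - lam (j + 1))
    (v vh : Fin p → ℝ) (hv : ∑ i, (v i) ^ 2 = 1) (hvh : ∑ i, (vh i) ^ 2 = 1)
    (hveig : S.mulVec v = lam j • v) (hvheig : Sh.mulVec vh = lamh j • vh)
    (hsign : 0 ≤ ∑ i, vh i * v i) :
    Real.sqrt (∑ i, (vh i - v i) ^ 2) ≤ (2 : ℝ) ^ ((3 : ℝ) / 2) * opNorm (Sh - S) / δ := by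
  obtain ⟨Q, hQ, hSdef⟩ := hSspec
  obtain ⟨Qh, hQh, hShdef⟩ := hShspec
  set ε := opNorm (Sh - S) with hε
  have hε0 : 0 ≤ ε := opNorm_nonneg' _
  clear_value ε
  -- quadratic form bound
  have hEbound : ∀ x : Fin p → ℝ, |x ⬝ᵥ ((Sh - S) *ᵥ x)| ≤ ε * (x ⬝ᵥ x) := by
    intro x
    have hx2 : x ⬝ᵥ x = ∑ i, (x i)^2 := by
      simp [dotProduct, sq]
    have hxnn : (0:ℝ) ≤ x ⬝ᵥ x := by
      rw [hx2]; exact Finset.sum_nonneg fun i _ => sq_nonneg _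
    have h1 : (x ⬝ᵥ ((Sh - S) *ᵥ x))^2
        ≤ (∑ i, (x i)^2) * (∑ i, ((Sh - S) *ᵥ x) i ^ 2) := by
      rw [dotProduct]
      exact Finset.sum_mul_sq_le_sq_mul_sq _ _ _
    have h2 := mulVec_sq_le (Sh - S) x
    rw [← hε] at h2
    have h3 : (x ⬝ᵥ ((Sh - S) *ᵥ x))^2 ≤ (ε * (x ⬝ᵥ x))^2 := by
      calc (x ⬝ᵥ ((Sh - S) *ᵥ x))^2
          ≤ (∑ i, (x i)^2) * (∑ i, ((Sh - S) *ᵥ x) i ^ 2) := h1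
        _ ≤ (∑ i, (x i)^2) * (ε^2 * ∑ i, (x i)^2) := by
            apply mul_le_mul_of_nonneg_left h2 (Finset.sum_nonneg fun i _ => sq_nonneg _)
        _ = (ε * (x ⬝ᵥ x))^2 := by rw [hx2]; ring
    exact abs_le.mpr (abs_le_of_sq_le_sq' h3 (mul_nonneg hε0 hxnn))
  -- Weyl inequalities
  have hW1 : lam j ≤ lamh j + ε := by
    apply weyl_aux_s4 p j hj1 hjp lam lamh hmono hmonoh Q Qh hQ hQh ε
    intro x
    rw [← hSdef, ← hShdef]
    exact hEbound x
  have hW2 : lamh j ≤ lam j + ε := by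
    apply weyl_aux_s4 p j hj1 hjp lamh lam hmonoh hmono Qh Q hQh hQ ε
    intro x
    rw [← hSdef, ← hShdef, ← neg_sub Sh S, neg_mulVec, dotProduct_neg, abs_neg]
    exact hEbound x
  -- coordinates
  set j0 : Fin p := ⟨j - 1, by omega⟩ with hj0
  set b : Fin p → ℝ := Qᵀ *ᵥ v with hb
  set c : Fin p → ℝ := Qᵀ *ᵥ vh with hc
  clear_value b c
  have hDb : ∀ i : Fin p, lam (i.1+1) * b i = lam j * b i := by
    intro i
    have h1 : Qᵀ *ᵥ (S *ᵥ v) = Matrix.diagonal (fun i : Fin p => lam (i.1+1)) *ᵥ b := by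
      rw [hSdef, mulVec_mulVec, ← mul_assoc, ← mul_assoc, hQ, one_mul, ← mulVec_mulVec, hb]
    have h2 : Qᵀ *ᵥ (S *ᵥ v) = lam j • b := by
      rw [hveig, mulVec_smul, hb]
    rw [h2] at h1
    have := congrFun h1.symm i
    rw [mulVec_diagonal] at this
    simpa using this
  -- separation
  have hsep : ∀ i : Fin p, i ≠ j0 → δ ≤ |lam (i.1+1) - lam j| := by
    intro i hi
    have hne : i.1 + 1 ≠ j := by
      intro h
      apply hi
      apply Fin.ext
      simp [hj0]; omega
    rcases lt_or_gt_of_ne hne with h | h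
    · have hj2 : 1 < j := by omega
      have h1 : lam (j-1) ≤ lam (i.1+1) := hmono (i.1+1) (j-1) (by omega) (by omega) (by omega)
      have h2 := hgapl hj2
      rw [le_abs]
      left; linarith
    · have hjp' : j < p := by omega
      have h1 : lam (i.1+1) ≤ lam (j+1) := hmono (j+1) (i.1+1) (by omega) (by omega) (by omega)
      have h2 := hgapu hjp'
      rw [le_abs]
      right; linarith
  have hb0 : ∀ i : Fin p, i ≠ j0 → b i = 0 := by
    intro i hi
    have h1 := hDb i
    have h2 := hsep i hi
    have h3 : lam (i.1+1) - lam j ≠ 0 := by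
      intro h
      rw [h] at h2; simp at h2; linarith
    have : (lam (i.1+1) - lam j) * b i = 0 := by linarith [h1]
    rcases mul_eq_zero.mp this with h | h
    · exact absurd h h3
    · exact h
  have hbb : b ⬝ᵥ b = 1 := by
    rw [hb, orth_dot' hQ]
    simpa [dotProduct, sq] using hv
  have hccd : c ⬝ᵥ c = 1 := by
    rw [hc, orth_dot' hQ]
    simpa [dotProduct, sq] using hvh
  have hbj0 : b j0 * b j0 = 1 := by
    rw [← hbb, dotProduct]
    exact (Finset.sum_eq_single (f := fun i => b i * b i) j0
      (fun i _ hi => by simp [hb0 i hi])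
      (fun h => absurd (Finset.mem_univ _) h)).symm
  -- residual
  set r : Fin p → ℝ := Qᵀ *ᵥ ((Sh - S) *ᵥ vh) with hr
  clear_value r
  have hrc : ∀ i : Fin p, r i = (lamh j - lam (i.1+1)) * c i := by
    intro i
    have h1 : (Sh - S) *ᵥ vh = lamh j • vh - S *ᵥ vh := by
      rw [sub_mulVec, hvheig]
    have h2 : r = lamh j • c - Matrix.diagonal (fun i : Fin p => lam (i.1+1)) *ᵥ c := by
      rw [hr, h1, mulVec_sub, mulVec_smul, hc, hSdef, mulVec_mulVec, ← mul_assoc,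
        ← mul_assoc, hQ, one_mul, ← mulVec_mulVec]
    have := congrFun h2 i
    rw [Pi.sub_apply, Pi.smul_apply, mulVec_diagonal, smul_eq_mul] at this
    rw [this]; ring
  have hrr : ∑ i, r i * r i ≤ ε^2 := by
    have h1 : ∑ i, r i * r i = ∑ i, ((Sh - S) *ᵥ vh) i ^ 2 := by
      have h0 : r ⬝ᵥ r = ((Sh - S) *ᵥ vh) ⬝ᵥ ((Sh - S) *ᵥ vh) := by
        rw [hr]; exact orth_dot' hQ _ _
      calc ∑ i, r i * r i = r ⬝ᵥ r := rfl
        _ = ((Sh - S) *ᵥ vh) ⬝ᵥ ((Sh - S) *ᵥ vh) := h0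
        _ = ∑ i, ((Sh - S) *ᵥ vh) i ^ 2 := by simp [dotProduct, sq]
    rw [h1]
    have h2 := mulVec_sq_le (Sh - S) vh
    rw [← hε] at h2
    calc ∑ i, ((Sh - S) *ᵥ vh) i ^ 2 ≤ ε^2 * ∑ i, (vh i)^2 := h2
      _ = ε^2 := by rw [hvh, mul_one]
  -- inner product
  set t : ℝ := ∑ i, vh i * v i with htdef
  clear_value t
  have htcb : t = c j0 * b j0 := by
    have h1 : c ⬝ᵥ b = vh ⬝ᵥ v := by rw [hc, hb, orth_dot' hQ]
    have h2 : c ⬝ᵥ b = c j0 * b j0 :=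
      Finset.sum_eq_single (f := fun i => c i * b i) j0
        (fun i _ hi => by simp [hb0 i hi])
        (fun h => absurd (Finset.mem_univ _) h)
    rw [htdef, show (∑ i, vh i * v i) = vh ⬝ᵥ v from rfl, ← h1, h2]
  have ht2 : t^2 = c j0 * c j0 := by
    rw [htcb]
    nlinarith [hbj0]
  have ht1 : t^2 ≤ 1 := by
    rw [ht2, ← hccd, dotProduct]
    exact Finset.single_le_sum (f := fun i => c i * c i)
      (fun i _ => mul_self_nonneg _) (Finset.mem_univ j0)
  have ht0 : 0 ≤ t := hsign
  -- sum expansion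
  have hsum : ∑ i, (vh i - v i)^2 = 2 - 2*t := by
    have h1 : ∀ i ∈ Finset.univ, (vh i - v i)^2
        = ((vh i)^2 + (v i)^2) - 2*(vh i * v i) := fun i _ => by ring
    rw [Finset.sum_congr rfl h1, Finset.sum_sub_distrib, Finset.sum_add_distrib,
      hv, hvh, ← Finset.mul_sum, htdef]
    ring
  -- the key bound
  have hmain : 2 - 2*t ≤ 8 * ε^2 / δ^2 := by
    rcases le_or_gt δ (2*ε) with hcase | hcase
    · rw [le_div_iff₀ (by positivity)]
      nlinarith
    · -- δ > 2ε
      have habs : |lamh j - lam j| ≤ ε := abs_le.mpr ⟨by linarith, by linarith⟩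
      have hkey : ∀ i : Fin p, i ≠ j0 → (δ/2)^2 * (c i * c i) ≤ r i * r i := by
        intro i hi
        have h1 := hsep i hi
        have h2 : δ - ε ≤ |lamh j - lam (i.1+1)| := by
          have := abs_sub_abs_le_abs_sub (lam (i.1+1) - lam j) (lamh j - lam j)
          have h3 : |lam (i.1+1) - lam j - (lamh j - lam j)| = |lamh j - lam (i.1+1)| := by
            rw [show lam (i.1+1) - lam j - (lamh j - lam j) = -(lamh j - lam (i.1+1)) by ring,
              abs_neg]
          rw [h3] at this
          linarith [abs_le.mp habs]
        have h4 : δ/2 ≤ |lamh j - lam (i.1+1)| := by linarith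
        have h5 : (δ/2)^2 ≤ (lamh j - lam (i.1+1))^2 := by
          rw [← sq_abs (lamh j - lam (i.1+1))]
          exact pow_le_pow_left₀ (by linarith) h4 2
        rw [hrc i]
        nlinarith [mul_self_nonneg (c i)]
      have hsumoff : (δ/2)^2 * (∑ i ∈ Finset.univ.erase j0, c i * c i) ≤ ε^2 := by
        calc (δ/2)^2 * (∑ i ∈ Finset.univ.erase j0, c i * c i)
            = ∑ i ∈ Finset.univ.erase j0, (δ/2)^2 * (c i * c i) := Finset.mul_sum _ _ _
          _ ≤ ∑ i ∈ Finset.univ.erase j0, r i * r i :=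
              Finset.sum_le_sum fun i hi => hkey i (Finset.ne_of_mem_erase hi)
          _ ≤ ∑ i, r i * r i := Finset.sum_le_sum_of_subset_of_nonneg
              (Finset.erase_subset _ _) (fun i _ _ => mul_self_nonneg _)
          _ ≤ ε^2 := hrr
      have herase : ∑ i ∈ Finset.univ.erase j0, c i * c i = 1 - t^2 := by
        have hccs : ∑ i : Fin p, c i * c i = 1 := hccd
        have h0 : ∑ x ∈ Finset.univ.erase j0, c x * c x + c j0 * c j0
            = ∑ x : Fin p, c x * c x :=
          Finset.sum_erase_add Finset.univ (fun i => c i * c i) (Finset.mem_univ j0)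
        rw [hccs] at h0
        rw [ht2]
        linarith
      rw [herase] at hsumoff
      have htle1 : t ≤ 1 := (abs_le_of_sq_le_sq' (by rw [one_pow]; exact ht1) zero_le_one).2
      rw [le_div_iff₀ (by positivity)]
      nlinarith [hsumoff, mul_nonneg (mul_nonneg ht0 (sub_nonneg.mpr htle1)) (sq_nonneg δ)]
  -- conclude
  have hR0 : 0 ≤ (2 : ℝ) ^ ((3 : ℝ) / 2) * ε / δ :=
    div_nonneg (mul_nonneg (Real.rpow_pos_of_pos two_pos _).le hε0) hδ.le
  rw [Real.sqrt_le_left hR0, hsum]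
  have h2 : ((2:ℝ)^((3:ℝ)/2))^2 = 8 := by
    rw [← Real.rpow_natCast ((2:ℝ)^((3:ℝ)/2)) 2, ← Real.rpow_mul (by norm_num : (0:ℝ) ≤ 2)]
    norm_num
  calc 2 - 2*t ≤ 8 * ε^2 / δ^2 := hmain
    _ = ((2:ℝ)^((3:ℝ)/2) * ε / δ)^2 := by
        rw [div_pow, mul_pow, h2]
end

section
/- Let Σ ∈ ℝ^{p×p} be symmetric with eigenvalues λ₁ ≥ … ≥ λ_p, fix 1 ≤ r ≤ s ≤ p with d := s − r + 1, assume δ := min(λ_{r−1} − λ_r, λ_s − λ_{s+1}) > 0 (with λ₀ := ∞, λ_{p+1} := −∞), and set Λ := diag(λ_r, …, λ_s). Let V = (v_r, …, v_s) ∈ ℝ^{p×d} have orthonormal columns with Σv_j = λ_j v_j for j = r, …, s, and let V̂ ∈ ℝ^{p×d} be any matrix with orthonormal columns. Then δ · ‖sin Θ(V̂, V)‖_F ≤ ‖V̂Λ − ΣV̂‖_F. -/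
open Matrix

lemma frobNorm_sq {m n : Type*} [Fintype m] [Fintype n] (A : Matrix m n ℝ) :
    frobNorm A ^ 2 = ∑ i, ∑ j, (A i j) ^ 2 := by
  rw [frobNorm, Real.sq_sqrt]
  positivity

lemma sum_sq_eq_trace {m n : Type*} [Fintype m] [Fintype n] (A : Matrix m n ℝ) :
    ∑ i, ∑ j, (A i j) ^ 2 = (Aᵀ * A).trace := by
  rw [Matrix.trace]
  simp only [Matrix.diag, Matrix.mul_apply, Matrix.transpose_apply]
  rw [Finset.sum_comm]
  simp [sq]

theorem stmt9
    (p r s d : ℕ) (hr : 1 ≤ r) (hrs : r ≤ s) (hsp : s ≤ p) (hd : d = s - r + 1)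
    (lam : ℕ → ℝ)
    (hmono : ∀ i j, 1 ≤ i → i ≤ j → j ≤ p → lam j ≤ lam i)
    (S : Matrix (Fin p) (Fin p) ℝ) (hSsymm : S.IsSymm)
    (hSspec : ∃ Q : Matrix (Fin p) (Fin p) ℝ, Qᵀ * Q = 1 ∧
      S = Q * Matrix.diagonal (fun i : Fin p => lam (i.1 + 1)) * Qᵀ)
    (δ : ℝ) (hδ : 0 < δ)
    (hgapr : 1 < r → δ ≤ lam (r - 1) - lam r)
    (hgaps : s < p → δ ≤ lam s - lam (s + 1))
    (V Vh : Matrix (Fin p) (Fin d) ℝ) (hV : Vᵀ * V = 1) (hVh : Vhᵀ * Vh = 1)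
    (hVeig : ∀ j : Fin d, S.mulVec (fun i => V i j) = lam (r + j.1) • (fun i => V i j)) :
    δ * Real.sqrt ((d : ℝ) - (frobNorm (Vhᵀ * V)) ^ 2) ≤
      frobNorm (Vh * Matrix.diagonal (fun j : Fin d => lam (r + j.1)) - S * Vh) := by
  obtain ⟨Q, hQ, hS⟩ := hSspec
  have hQ' : Q * Qᵀ = 1 := mul_eq_one_comm.mp hQ
  have hds : r + d - 1 = s := by omega
  set μ : Fin p → ℝ := fun i => lam (i.1 + 1) with hμ
  set ν : Fin d → ℝ := fun j => lam (r + j.1) with hν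
  set D : Matrix (Fin p) (Fin p) ℝ := Matrix.diagonal μ with hD
  set Λ : Matrix (Fin d) (Fin d) ℝ := Matrix.diagonal ν with hΛ
  set W : Matrix (Fin p) (Fin d) ℝ := Qᵀ * Vh with hW
  set U : Matrix (Fin p) (Fin d) ℝ := Qᵀ * V with hU
  set E : Matrix (Fin p) (Fin d) ℝ := Vh * Λ - S * Vh with hE
  -- S * V = V * Λ
  have hSV : S * V = V * Λ := by
    ext i j
    have h := congrFun (hVeig j) i
    simp only [Matrix.mulVec, dotProduct, Pi.smul_apply, smul_eq_mul] at h
    rw [Matrix.mul_apply, hΛ, Matrix.mul_diagonal]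
    rw [h, hν]
    ring
  have hQS : Qᵀ * S = D * Qᵀ := by
    rw [hS, ← Matrix.mul_assoc, ← Matrix.mul_assoc, hQ, Matrix.one_mul]
  -- D * U = U * Λ
  have hDU : D * U = U * Λ := by
    rw [hU, ← Matrix.mul_assoc, ← hQS, Matrix.mul_assoc, hSV, ← Matrix.mul_assoc]
  -- gap facts
  have hjle : ∀ j : Fin d, r + j.1 ≤ s := fun j => by omega
  have hlow : ∀ i : Fin p, i.1 + 1 < r → ∀ j : Fin d, δ ≤ μ i - ν j := by
    intro i hi j
    have h1 : lam (r - 1) ≤ lam (i.1 + 1) := hmono _ _ (by omega) (by omega) (by omega)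
    have h2 : δ ≤ lam (r - 1) - lam r := hgapr (by omega)
    have h3 : lam (r + j.1) ≤ lam r := hmono _ _ (by omega) (by omega) (by omega)
    simp only [hμ, hν]
    linarith
  have hhigh : ∀ i : Fin p, s < i.1 + 1 → ∀ j : Fin d, δ ≤ ν j - μ i := by
    intro i hi j
    have hip := i.2
    have h1 : lam (i.1 + 1) ≤ lam (s + 1) := hmono _ _ (by omega) (by omega) (by omega)
    have h2 : δ ≤ lam s - lam (s + 1) := hgaps (by omega)
    have h3 : lam s ≤ lam (r + j.1) := hmono _ _ (by omega) (hjle j) (by omega)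
    simp only [hμ, hν]
    linarith
  -- zero rows of U
  have hU0 : ∀ i : Fin p, ∀ j : Fin d, (i.1 + 1 < r ∨ s < i.1 + 1) → U i j = 0 := by
    intro i j hij
    have h := congrFun (congrFun hDU i) j
    rw [hD, Matrix.diagonal_mul, hΛ, Matrix.mul_diagonal] at h
    have hne : μ i - ν j ≠ 0 := by
      rcases hij with h1 | h1
      · have := hlow i h1 j; intro hc; linarith
      · have := hhigh i h1 j; intro hc; linarith
    have : (μ i - ν j) * U i j = 0 := by linarith [h]
    exact (mul_eq_zero.mp this).resolve_left hne
  -- the index embedding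
  have hedlt : ∀ t : Fin d, r - 1 + t.1 < p := fun t => by have := t.2; omega
  set e : Fin d → Fin p := fun t => ⟨r - 1 + t.1, hedlt t⟩ with he
  have heinj : Function.Injective e := by
    intro a b hab
    have : r - 1 + a.1 = r - 1 + b.1 := congrArg Fin.val hab
    exact Fin.ext (by omega)
  set Jf : Finset (Fin p) := Finset.univ.filter (fun i : Fin p => r ≤ i.1 + 1 ∧ i.1 + 1 ≤ s) with hJf
  have himg : Jf = Finset.image e Finset.univ := by
    ext i
    simp only [hJf, Finset.mem_filter, Finset.mem_univ, true_and, Finset.mem_image, he]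
    constructor
    · rintro ⟨h1, h2⟩
      refine ⟨⟨i.1 - (r - 1), by omega⟩, Fin.ext ?_⟩
      simp; omega
    · rintro ⟨t, rfl⟩
      have := t.2
      simp; omega
  have hmemc : ∀ i : Fin p, i ∈ Jfᶜ ↔ (i.1 + 1 < r ∨ s < i.1 + 1) := by
    intro i
    simp only [Finset.mem_compl, hJf, Finset.mem_filter, Finset.mem_univ, true_and]
    omega
  have hsum_reduce : ∀ F : Fin p → ℝ, (∀ i : Fin p, (i.1 + 1 < r ∨ s < i.1 + 1) → F i = 0) →
      ∑ i, F i = ∑ t : Fin d, F (e t) := by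
    intro F h0
    rw [← Finset.sum_add_sum_compl Jf F]
    have h2 : ∑ i ∈ Jfᶜ, F i = 0 :=
      Finset.sum_eq_zero (fun i hi => h0 i ((hmemc i).mp hi))
    rw [h2, add_zero, himg, Finset.sum_image (fun a _ b _ hab => heinj hab)]
  -- submatrices
  set B : Matrix (Fin d) (Fin d) ℝ := U.submatrix e id with hB
  set C : Matrix (Fin d) (Fin d) ℝ := W.submatrix e id with hC
  have hUtU : Uᵀ * U = 1 := by
    rw [hU, Matrix.transpose_mul, Matrix.transpose_transpose, Matrix.mul_assoc,
      ← Matrix.mul_assoc Q, hQ', Matrix.one_mul, hV]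
  have hBtB : Bᵀ * B = 1 := by
    ext j j'
    have : (Bᵀ * B) j j' = ∑ t : Fin d, U (e t) j * U (e t) j' := by
      simp [Matrix.mul_apply, hB, Matrix.submatrix_apply]
    rw [this, ← hsum_reduce (fun i => U i j * U i j')
      (fun i hi => by simp [hU0 i j hi])]
    have : (Uᵀ * U) j j' = ∑ i, U i j * U i j' := by
      simp [Matrix.mul_apply]
    rw [← this, hUtU]
  have hBBt : B * Bᵀ = 1 := mul_eq_one_comm.mp hBtB
  -- Frobenius of VhᵀV
  have hWtU : Wᵀ * U = Vhᵀ * V := by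
    rw [hW, hU, Matrix.transpose_mul, Matrix.transpose_transpose, Matrix.mul_assoc,
      ← Matrix.mul_assoc Q, hQ', Matrix.one_mul]
  have hVhV : Vhᵀ * V = Cᵀ * B := by
    rw [← hWtU]
    ext k j
    have h1 : (Wᵀ * U) k j = ∑ i, W i k * U i j := by
      simp [Matrix.mul_apply]
    have h2 : (Cᵀ * B) k j = ∑ t : Fin d, W (e t) k * U (e t) j := by
      simp [Matrix.mul_apply, hB, hC, Matrix.submatrix_apply]
    rw [h1, h2, hsum_reduce (fun i => W i k * U i j)
      (fun i hi => by simp [hU0 i j hi])]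
  have hfrobV : frobNorm (Vhᵀ * V) ^ 2 = ∑ t : Fin d, ∑ k : Fin d, W (e t) k ^ 2 := by
    rw [frobNorm_sq, sum_sq_eq_trace, hVhV]
    have : (Cᵀ * B)ᵀ * (Cᵀ * B) = Bᵀ * (C * Cᵀ * B) := by
      rw [Matrix.transpose_mul, Matrix.transpose_transpose]
      noncomm_ring
    rw [this, Matrix.trace_mul_comm, Matrix.mul_assoc (C * Cᵀ) B Bᵀ, hBBt, Matrix.mul_one]
    have : (C * Cᵀ).trace = ∑ k : Fin d, ∑ t : Fin d, (Cᵀ k t) ^ 2 := by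
      rw [sum_sq_eq_trace Cᵀ, Matrix.transpose_transpose]
    rw [this, Finset.sum_comm]
    simp [hC, Matrix.submatrix_apply]
  -- Frobenius of E
  have hQE : Qᵀ * E = W * Λ - D * W := by
    rw [hE, Matrix.mul_sub, ← Matrix.mul_assoc Qᵀ S Vh, hQS, Matrix.mul_assoc D Qᵀ Vh,
      ← hW, ← Matrix.mul_assoc Qᵀ Vh Λ, ← hW]
  have hfrobE : frobNorm E ^ 2 = ∑ i, ∑ k, (ν k - μ i) ^ 2 * W i k ^ 2 := by
    rw [frobNorm_sq, sum_sq_eq_trace]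
    have h1 : Eᵀ * E = (Qᵀ * E)ᵀ * (Qᵀ * E) := by
      rw [Matrix.transpose_mul, Matrix.transpose_transpose, Matrix.mul_assoc,
        ← Matrix.mul_assoc Q, hQ', Matrix.one_mul]
    rw [h1, ← sum_sq_eq_trace, hQE]
    apply Finset.sum_congr rfl
    intro i _
    apply Finset.sum_congr rfl
    intro k _
    rw [Matrix.sub_apply, hΛ, Matrix.mul_diagonal, hD, Matrix.diagonal_mul]
    ring
  -- total weight
  have hsumW : ∑ i, ∑ k, W i k ^ 2 = (d : ℝ) := by
    rw [sum_sq_eq_trace]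
    have : Wᵀ * W = 1 := by
      rw [hW, Matrix.transpose_mul, Matrix.transpose_transpose, Matrix.mul_assoc,
        ← Matrix.mul_assoc Q, hQ', Matrix.one_mul, hVh]
    rw [this, Matrix.trace_one]
    simp
  -- split
  have hsplit : ∑ i, ∑ k, W i k ^ 2 =
      (∑ i ∈ Jf, ∑ k, W i k ^ 2) + ∑ i ∈ Jfᶜ, ∑ k, W i k ^ 2 :=
    (Finset.sum_add_sum_compl Jf _).symm
  have himgsum : ∑ i ∈ Jf, ∑ k, W i k ^ 2 = ∑ t : Fin d, ∑ k, W (e t) k ^ 2 := by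
    rw [himg, Finset.sum_image (fun a _ b _ hab => heinj hab)]
  have hcompl : (d : ℝ) - frobNorm (Vhᵀ * V) ^ 2 = ∑ i ∈ Jfᶜ, ∑ k, W i k ^ 2 := by
    rw [hfrobV, ← himgsum, ← hsumW, hsplit]; ring
  -- key inequality
  have step1 : ∑ i ∈ Jfᶜ, δ ^ 2 * ∑ k, W i k ^ 2 ≤ ∑ i ∈ Jfᶜ, ∑ k, (ν k - μ i) ^ 2 * W i k ^ 2 := by
    apply Finset.sum_le_sum
    intro i hi
    rw [Finset.mul_sum]
    apply Finset.sum_le_sum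
    intro k _
    have hge : δ ^ 2 ≤ (ν k - μ i) ^ 2 := by
      rcases (hmemc i).mp hi with h1 | h1
      · have h2 : δ ^ 2 ≤ (μ i - ν k) ^ 2 := pow_le_pow_left₀ hδ.le (hlow i h1 k) 2
        have h3 : (μ i - ν k) ^ 2 = (ν k - μ i) ^ 2 := by ring
        linarith
      · exact pow_le_pow_left₀ hδ.le (hhigh i h1 k) 2
    exact mul_le_mul_of_nonneg_right hge (sq_nonneg _)
  have step2 : ∑ i ∈ Jfᶜ, ∑ k, (ν k - μ i) ^ 2 * W i k ^ 2 ≤ ∑ i, ∑ k, (ν k - μ i) ^ 2 * W i k ^ 2 := by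
    apply Finset.sum_le_sum_of_subset_of_nonneg (Finset.subset_univ _)
    intro i _ _
    positivity
  have hkey : δ ^ 2 * ((d : ℝ) - frobNorm (Vhᵀ * V) ^ 2) ≤ frobNorm E ^ 2 := by
    rw [hcompl, hfrobE, Finset.mul_sum]
    exact le_trans step1 step2
  -- conclude
  have hnn : 0 ≤ (d : ℝ) - frobNorm (Vhᵀ * V) ^ 2 := by
    rw [hcompl]
    positivity
  have h1 : δ * Real.sqrt ((d : ℝ) - frobNorm (Vhᵀ * V) ^ 2) =
      Real.sqrt (δ ^ 2 * ((d : ℝ) - frobNorm (Vhᵀ * V) ^ 2)) := by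
    rw [Real.sqrt_mul (sq_nonneg δ), Real.sqrt_sq hδ.le]
  rw [h1]
  calc Real.sqrt (δ ^ 2 * ((d : ℝ) - frobNorm (Vhᵀ * V) ^ 2))
      ≤ Real.sqrt (frobNorm E ^ 2) := Real.sqrt_le_sqrt hkey
    _ = frobNorm E := Real.sqrt_sq (Real.sqrt_nonneg _)
end

section
/- Let Σ, Σ̂ ∈ ℝ^{p×p} be symmetric matrices with eigenvalues λ₁ ≥ … ≥ λ_p and λ̂₁ ≥ … ≥ λ̂_p respectively, fix 1 ≤ r ≤ s ≤ p with d := s − r + 1, and set Λ := diag(λ_r, …, λ_s). Let V̂ = (v̂_r, …, v̂_s) ∈ ℝ^{p×d} have orthonormal columns satisfying Σ̂v̂_j = λ̂_j v̂_j for j = r, …, s. Then ‖V̂Λ − ΣV̂‖_F ≤ 2 d^{1/2} ‖Σ̂ − Σ‖_op. -/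
open Matrix

lemma euclid_norm {n : ℕ} (v : Fin n → ℝ) :
    ‖(WithLp.equiv 2 (Fin n → ℝ)).symm v‖ = Real.sqrt (∑ i, v i ^ 2) := by
  rw [EuclideanSpace.norm_eq]
  congr 1
  refine Finset.sum_congr rfl fun i _ => ?_
  simp [sq_abs]

lemma mulVec_norm_le {p q : ℕ} (M : Matrix (Fin p) (Fin q) ℝ) (x : Fin q → ℝ) :
    Real.sqrt (∑ i, (M *ᵥ x) i ^ 2) ≤ opNorm M * Real.sqrt (∑ i, x i ^ 2) := by
  rw [← euclid_norm, ← euclid_norm]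
  have h := (LinearMap.toContinuousLinearMap (Matrix.toEuclideanLin M)).le_opNorm
    ((WithLp.equiv 2 (Fin q → ℝ)).symm x)
  simpa [Matrix.toEuclideanLin_toLp, opNorm] using h

lemma quad_le {n : ℕ} (M : Matrix (Fin n) (Fin n) ℝ) (x : Fin n → ℝ) :
    x ⬝ᵥ (M *ᵥ x) ≤ opNorm M * (∑ i, x i ^ 2) := by
  set y := (WithLp.equiv 2 (Fin n → ℝ)).symm x with hy
  have h1 : x ⬝ᵥ (M *ᵥ x) = inner ℝ y (Matrix.toEuclideanLin M y) := by
    rw [hy]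
    simp [Matrix.toEuclideanLin_toLp, PiLp.inner_apply, RCLike.inner_apply,
      dotProduct, mul_comm]
  have h2 : inner ℝ y (Matrix.toEuclideanLin M y) ≤ ‖y‖ * ‖Matrix.toEuclideanLin M y‖ :=
    real_inner_le_norm _ _
  have h3 : ‖Matrix.toEuclideanLin M y‖ ≤ opNorm M * ‖y‖ := by
    exact (LinearMap.toContinuousLinearMap (Matrix.toEuclideanLin M)).le_opNorm y
  have h4 : ‖y‖ * ‖y‖ = ∑ i, x i ^ 2 := by
    rw [hy, euclid_norm, Real.mul_self_sqrt]
    positivity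
  calc x ⬝ᵥ (M *ᵥ x) ≤ ‖y‖ * ‖Matrix.toEuclideanLin M y‖ := h1 ▸ h2
    _ ≤ ‖y‖ * (opNorm M * ‖y‖) := by
        exact mul_le_mul_of_nonneg_left h3 (norm_nonneg _)
    _ = opNorm M * (∑ i, x i ^ 2) := by rw [← h4]; ring

noncomputable def Lmap {p : ℕ} (k : ℕ) (A B : Matrix (Fin p) (Fin p) ℝ) :
    (Fin p → ℝ) →ₗ[ℝ] ({i : Fin p // i.1 + 1 ≠ k} → ℝ) where
  toFun x i := if i.1.1 + 1 < k then (A *ᵥ x) i.1 else (B *ᵥ x) i.1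
  map_add' x y := by
    funext i; by_cases h : i.1.1 + 1 < k <;> simp [h, Matrix.mulVec_add]
  map_smul' c x := by
    funext i; by_cases h : i.1.1 + 1 < k <;> simp [h, Matrix.mulVec_smul]

lemma card_ne (p k : ℕ) (hk1 : 1 ≤ k) (hkp : k ≤ p) :
    Fintype.card {i : Fin p // i.1 + 1 ≠ k} = p - 1 := by
  have h1 : Fintype.card {i : Fin p // i.1 + 1 = k} = 1 := by
    rw [Fintype.card_eq_one_iff]
    refine ⟨⟨⟨k - 1, by omega⟩, by simp; omega⟩, ?_⟩
    rintro ⟨⟨i, hi⟩, h⟩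
    ext
    simp at h ⊢
    omega
  have h2 := Fintype.card_subtype_compl (fun i : Fin p => i.1 + 1 = k)
  simp only [Fintype.card_fin, h1] at h2
  exact h2

lemma exists_ker {p : ℕ} (k : ℕ) (hk1 : 1 ≤ k) (hkp : k ≤ p)
    (A B : Matrix (Fin p) (Fin p) ℝ) :
    ∃ x : Fin p → ℝ, x ≠ 0 ∧
      (∀ i : Fin p, i.1 + 1 < k → (A *ᵥ x) i = 0) ∧
      (∀ i : Fin p, k < i.1 + 1 → (B *ᵥ x) i = 0) := by
  by_contra hcon
  push_neg at hcon
  have hker : ∀ x, Lmap k A B x = 0 → x = 0 := by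
    intro x hx
    by_contra hx0
    obtain ⟨i, hik, hne⟩ := hcon x hx0 (fun i hi => by
      have := congrFun hx ⟨i, by omega⟩
      simpa [Lmap, hi] using this)
    have := congrFun hx ⟨i, by omega⟩
    have hnlt : ¬ (i.1 + 1 < k) := by omega
    simp [Lmap, hnlt] at this
    exact hne this
  have hinj : Function.Injective (Lmap k A B) :=
    LinearMap.ker_eq_bot.mp (LinearMap.ker_eq_bot'.mpr hker)
  have hle := LinearMap.finrank_le_finrank_of_injective hinj
  rw [Module.finrank_fintype_fun_eq_card, Module.finrank_fintype_fun_eq_card,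
    Fintype.card_fin, card_ne p k hk1 hkp] at hle
  omega

lemma norm_preserve {p : ℕ} (Q : Matrix (Fin p) (Fin p) ℝ) (hQ : Qᵀ * Q = 1)
    (x : Fin p → ℝ) : (Qᵀ *ᵥ x) ⬝ᵥ (Qᵀ *ᵥ x) = x ⬝ᵥ x := by
  have hQQ : Q * Qᵀ = 1 := mul_eq_one_comm.mp hQ
  rw [Matrix.dotProduct_mulVec, Matrix.vecMul_transpose, Matrix.mulVec_mulVec, hQQ,
    Matrix.one_mulVec]

lemma quad_spec {p : ℕ} (Q : Matrix (Fin p) (Fin p) ℝ) (f : Fin p → ℝ)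
    (x : Fin p → ℝ) :
    x ⬝ᵥ ((Q * Matrix.diagonal f * Qᵀ) *ᵥ x) = ∑ i, f i * ((Qᵀ *ᵥ x) i) ^ 2 := by
  rw [← Matrix.mulVec_mulVec, ← Matrix.mulVec_mulVec, Matrix.dotProduct_mulVec,
    ← Matrix.mulVec_transpose]
  simp only [dotProduct, Matrix.mulVec_diagonal]
  exact Finset.sum_congr rfl fun i _ => by ring

lemma weyl_le (p k : ℕ) (hk1 : 1 ≤ k) (hkp : k ≤ p) (lam lamh : ℕ → ℝ)
    (hmono : ∀ i j, 1 ≤ i → i ≤ j → j ≤ p → lam j ≤ lam i)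
    (hmonoh : ∀ i j, 1 ≤ i → i ≤ j → j ≤ p → lamh j ≤ lamh i)
    (S Sh : Matrix (Fin p) (Fin p) ℝ)
    (hSspec : ∃ Q : Matrix (Fin p) (Fin p) ℝ, Qᵀ * Q = 1 ∧
      S = Q * Matrix.diagonal (fun i : Fin p => lam (i.1 + 1)) * Qᵀ)
    (hShspec : ∃ Q : Matrix (Fin p) (Fin p) ℝ, Qᵀ * Q = 1 ∧
      Sh = Q * Matrix.diagonal (fun i : Fin p => lamh (i.1 + 1)) * Qᵀ) :
    lam k ≤ lamh k + opNorm (S - Sh) := by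
  obtain ⟨Q, hQ, hS⟩ := hSspec
  obtain ⟨Qh, hQh, hSh⟩ := hShspec
  obtain ⟨x, hx0, hA, hB⟩ := exists_ker k hk1 hkp Qhᵀ Qᵀ
  set c : Fin p → ℝ := Qᵀ *ᵥ x with hc
  set ch : Fin p → ℝ := Qhᵀ *ᵥ x with hch
  set n2 : ℝ := ∑ i, x i ^ 2 with hn2def
  have hsq : ∀ v : Fin p → ℝ, v ⬝ᵥ v = ∑ i, v i ^ 2 := by
    intro v; simp [dotProduct, sq]
  have hcn : ∑ i, c i ^ 2 = n2 := by
    rw [hn2def, ← hsq, ← hsq, hc]; exact norm_preserve Q hQ x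
  have hchn : ∑ i, ch i ^ 2 = n2 := by
    rw [hn2def, ← hsq, ← hsq, hch]; exact norm_preserve Qh hQh x
  have hn2pos : 0 < n2 := by
    obtain ⟨i, hi⟩ : ∃ i, x i ≠ 0 := by rwa [Function.ne_iff] at hx0
    exact Finset.sum_pos' (fun j _ => sq_nonneg _)
      ⟨i, Finset.mem_univ i, by positivity⟩
  have hquadS : x ⬝ᵥ (S *ᵥ x) = ∑ i, lam (i.1 + 1) * (c i) ^ 2 := by
    rw [hS]; exact quad_spec Q _ x
  have hquadSh : x ⬝ᵥ (Sh *ᵥ x) = ∑ i, lamh (i.1 + 1) * (ch i) ^ 2 := by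
    rw [hSh]; exact quad_spec Qh _ x
  -- lower bound for S quadratic form
  have hlow : lam k * n2 ≤ x ⬝ᵥ (S *ᵥ x) := by
    rw [hquadS, ← hcn, Finset.mul_sum]
    refine Finset.sum_le_sum fun i _ => ?_
    by_cases h : k < i.1 + 1
    · rw [hB i h]; simp
    · push_neg at h
      exact mul_le_mul_of_nonneg_right
        (hmono (i.1 + 1) k (by omega) h hkp) (sq_nonneg _)
  -- upper bound for Sh quadratic form
  have hhigh : x ⬝ᵥ (Sh *ᵥ x) ≤ lamh k * n2 := by
    rw [hquadSh, ← hchn, Finset.mul_sum]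
    refine Finset.sum_le_sum fun i _ => ?_
    by_cases h : i.1 + 1 < k
    · rw [hA i h]; simp
    · push_neg at h
      exact mul_le_mul_of_nonneg_right
        (hmonoh k (i.1 + 1) hk1 h (by omega)) (sq_nonneg _)
  have hdiff : x ⬝ᵥ (S *ᵥ x) - x ⬝ᵥ (Sh *ᵥ x) ≤ opNorm (S - Sh) * n2 := by
    have : x ⬝ᵥ ((S - Sh) *ᵥ x) ≤ opNorm (S - Sh) * n2 := quad_le _ x
    simpa [Matrix.sub_mulVec, dotProduct_sub] using this
  have hfin : lam k * n2 ≤ (lamh k + opNorm (S - Sh)) * n2 := by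
    have := hlow.trans (by linarith : x ⬝ᵥ (S *ᵥ x) ≤ lamh k * n2 + opNorm (S - Sh) * n2)
    linarith [this]
  exact le_of_mul_le_mul_right (by linarith [hfin]) hn2pos

theorem stmt10
    (p r s d : ℕ) (hr : 1 ≤ r) (hrs : r ≤ s) (hsp : s ≤ p) (hd : d = s - r + 1)
    (lam lamh : ℕ → ℝ)
    (hmono : ∀ i j, 1 ≤ i → i ≤ j → j ≤ p → lam j ≤ lam i)
    (hmonoh : ∀ i j, 1 ≤ i → i ≤ j → j ≤ p → lamh j ≤ lamh i)
    (S Sh : Matrix (Fin p) (Fin p) ℝ) (hSsymm : S.IsSymm) (hShsymm : Sh.IsSymm)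
    (hSspec : ∃ Q : Matrix (Fin p) (Fin p) ℝ, Qᵀ * Q = 1 ∧
      S = Q * Matrix.diagonal (fun i : Fin p => lam (i.1 + 1)) * Qᵀ)
    (hShspec : ∃ Q : Matrix (Fin p) (Fin p) ℝ, Qᵀ * Q = 1 ∧
      Sh = Q * Matrix.diagonal (fun i : Fin p => lamh (i.1 + 1)) * Qᵀ)
    (Vh : Matrix (Fin p) (Fin d) ℝ) (hVh : Vhᵀ * Vh = 1)
    (hVheig : ∀ j : Fin d, Sh.mulVec (fun i => Vh i j) = lamh (r + j.1) • (fun i => Vh i j)) :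
    frobNorm (Vh * Matrix.diagonal (fun j : Fin d => lam (r + j.1)) - S * Vh) ≤
      2 * Real.sqrt d * opNorm (Sh - S) := by
  set ε := opNorm (Sh - S) with hε
  have hε0 : 0 ≤ ε := norm_nonneg _
  set M := Vh * Matrix.diagonal (fun j : Fin d => lam (r + j.1)) - S * Vh with hM
  -- per-column bound
  have hcol : ∀ j : Fin d, ∑ i, M i j ^ 2 ≤ (2 * ε) ^ 2 := by
    intro j
    set k := r + j.1 with hk
    have hk1 : 1 ≤ k := by omega
    have hkp : k ≤ p := by omega
    set col : Fin p → ℝ := fun i => Vh i j with hcol'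
    -- eigenvalue gap via Weyl
    have hw1 : lam k ≤ lamh k + ε := by
      have := weyl_le p k hk1 hkp lam lamh hmono hmonoh S Sh hSspec hShspec
      rwa [opNorm_sub_comm, ← hε] at this
    have hw2 : lamh k ≤ lam k + ε := by
      have := weyl_le p k hk1 hkp lamh lam hmonoh hmono Sh S hShspec hSspec
      rwa [← hε] at this
    have habs : |lam k - lamh k| ≤ ε := abs_le.mpr ⟨by linarith, by linarith⟩
    -- column identity
    have hMcol : ∀ i, M i j = (lam k - lamh k) * col i + ((Sh - S) *ᵥ col) i := by
      intro i
      have heig := congrFun (hVheig j) i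
      simp only [Pi.smul_apply, smul_eq_mul] at heig
      have hSVh : (S * Vh) i j = (S *ᵥ col) i := by
        simp [Matrix.mul_apply, Matrix.mulVec, dotProduct, hcol']
      simp only [hM, Matrix.sub_apply, Matrix.mul_diagonal, hSVh,
        Matrix.sub_mulVec, Pi.sub_apply, hcol', hk, heig]
      ring
    -- column norm = 1
    have hcol1 : ∑ i, col i ^ 2 = 1 := by
      have := congrFun (congrFun hVh j) j
      simp only [Matrix.mul_apply, Matrix.transpose_apply, Matrix.one_apply_eq] at this
      rw [← this]
      exact Finset.sum_congr rfl fun i _ => by rw [hcol']; ring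
    -- euclidean triangle inequality
    have hnorm : Real.sqrt (∑ i, M i j ^ 2) ≤ 2 * ε := by
      have hMj : (fun i => M i j) =
          (lam k - lamh k) • col + ((Sh - S) *ᵥ col) := by
        funext i; simpa using hMcol i
      calc Real.sqrt (∑ i, M i j ^ 2)
          = ‖(WithLp.equiv 2 (Fin p → ℝ)).symm (fun i => M i j)‖ := (euclid_norm _).symm
        _ = ‖(lam k - lamh k) • (WithLp.equiv 2 (Fin p → ℝ)).symm col
              + (WithLp.equiv 2 (Fin p → ℝ)).symm ((Sh - S) *ᵥ col)‖ := by
            rw [hMj]; rfl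
        _ ≤ ‖(lam k - lamh k) • (WithLp.equiv 2 (Fin p → ℝ)).symm col‖
              + ‖(WithLp.equiv 2 (Fin p → ℝ)).symm ((Sh - S) *ᵥ col)‖ := norm_add_le _ _
        _ ≤ ε * 1 + ε * 1 := by
            gcongr
            · rw [norm_smul, euclid_norm, hcol1, Real.sqrt_one]
              simpa using habs
            · calc ‖(WithLp.equiv 2 (Fin p → ℝ)).symm ((Sh - S) *ᵥ col)‖
                  = Real.sqrt (∑ i, ((Sh - S) *ᵥ col) i ^ 2) := euclid_norm _
                _ ≤ opNorm (Sh - S) * Real.sqrt (∑ i, col i ^ 2) := mulVec_norm_le _ _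
                _ = ε * 1 := by rw [hcol1, Real.sqrt_one, ← hε]
        _ = 2 * ε := by ring
    have h0 : 0 ≤ ∑ i, M i j ^ 2 := by positivity
    calc ∑ i, M i j ^ 2 = Real.sqrt (∑ i, M i j ^ 2) ^ 2 := (Real.sq_sqrt h0).symm
      _ ≤ (2 * ε) ^ 2 := pow_le_pow_left₀ (Real.sqrt_nonneg _) hnorm 2
  -- assemble
  rw [frobNorm]
  have hsum : ∑ i, ∑ j, M i j ^ 2 ≤ d * (2 * ε) ^ 2 := by
    rw [Finset.sum_comm]
    calc ∑ j : Fin d, ∑ i, M i j ^ 2 ≤ ∑ _j : Fin d, (2 * ε) ^ 2 :=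
          Finset.sum_le_sum fun j _ => hcol j
      _ = d * (2 * ε) ^ 2 := by simp [Finset.sum_const, mul_comm]
  calc Real.sqrt (∑ i, ∑ j, M i j ^ 2) ≤ Real.sqrt (d * (2 * ε) ^ 2) :=
        Real.sqrt_le_sqrt hsum
    _ = Real.sqrt d * (2 * ε) := by
        rw [Real.sqrt_mul (by positivity), Real.sqrt_sq (by positivity)]
    _ = 2 * Real.sqrt d * ε := by ring
end

section
/- Let Σ, Σ̂ ∈ ℝ^{p×p} be symmetric matrices with eigenvalues λ₁ ≥ … ≥ λ_p and λ̂₁ ≥ … ≥ λ̂_p respectively, fix 1 ≤ r ≤ s ≤ p with d := s − r + 1, and set Λ := diag(λ_r, …, λ_s). Let V̂ = (v̂_r, …, v̂_s) ∈ ℝ^{p×d} have orthonormal columns satisfying Σ̂v̂_j = λ̂_j v̂_j for j = r, …, s. Then ‖V̂Λ − ΣV̂‖_F ≤ 2 ‖Σ̂ − Σ‖_F. -/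
open Matrix

attribute [local instance] Matrix.frobeniusSeminormedAddCommGroup

lemma frobNorm_eq_norm {m n : Type*} [Fintype m] [Fintype n] (A : Matrix m n ℝ) :
    frobNorm A = ‖A‖ := by
  rw [Matrix.frobenius_norm_def, frobNorm, Real.sqrt_eq_rpow]
  congr 1
  refine Finset.sum_congr rfl fun i _ => Finset.sum_congr rfl fun j _ => ?_
  rw [Real.norm_eq_abs, show (2:ℝ) = ((2:ℕ):ℝ) by norm_num, Real.rpow_natCast, sq_abs]

lemma sumsq_eq_trace {m n : Type*} [Fintype m] [Fintype n] (A : Matrix m n ℝ) :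
    (∑ i, ∑ j, A i j ^ 2) = Matrix.trace (Aᵀ * A) := by
  rw [Matrix.trace]
  simp only [Matrix.diag_apply, Matrix.mul_apply, Matrix.transpose_apply]
  rw [Finset.sum_comm]
  exact Finset.sum_congr rfl fun i _ => Finset.sum_congr rfl fun j _ => (pow_two _)

lemma trace_proj_le {p d : ℕ} (A : Matrix (Fin p) (Fin p) ℝ) (V : Matrix (Fin p) (Fin d) ℝ)
    (hV : Vᵀ * V = 1) :
    Matrix.trace ((A * V)ᵀ * (A * V)) ≤ Matrix.trace (Aᵀ * A) := by
  set P : Matrix (Fin p) (Fin p) ℝ := V * Vᵀ with hP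
  have hPsymm : Pᵀ = P := by simp [hP, Matrix.transpose_mul]
  have hPP : P * P = P := by
    rw [hP, Matrix.mul_assoc, ← Matrix.mul_assoc Vᵀ V Vᵀ, hV, Matrix.one_mul]
  have hproj : (1 - P) * (1 - P) = 1 - P := by
    have h := hPP
    have : (1 - P) * (1 - P) = 1 - P - P + P * P := by noncomm_ring
    rw [this, h]; abel
  have e2 : (A * V)ᵀ * (A * V) = Vᵀ * (Aᵀ * A) * V := by
    rw [Matrix.transpose_mul, Matrix.mul_assoc Vᵀ Aᵀ (A * V), ← Matrix.mul_assoc Aᵀ A V,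
      ← Matrix.mul_assoc Vᵀ (Aᵀ * A) V]
  have h1 : Matrix.trace ((A * V)ᵀ * (A * V)) = Matrix.trace (Aᵀ * A * P) := by
    rw [e2, Matrix.trace_mul_cycle, ← hP, Matrix.trace_mul_comm]
  have h2 : Matrix.trace ((A * (1 - P))ᵀ * (A * (1 - P)))
      = Matrix.trace (Aᵀ * A) - Matrix.trace (Aᵀ * A * P) := by
    have e1 : (A * (1 - P))ᵀ * (A * (1 - P)) = (1 - P) * (Aᵀ * A) * (1 - P) := by
      rw [Matrix.transpose_mul, Matrix.transpose_sub, Matrix.transpose_one, hPsymm]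
      noncomm_ring
    rw [e1, Matrix.trace_mul_cycle, ← Matrix.mul_assoc, hproj]
    have e3 : (1 - P) * Aᵀ * A = Aᵀ * A - P * (Aᵀ * A) := by noncomm_ring
    rw [e3, Matrix.trace_sub, Matrix.trace_mul_comm P (Aᵀ * A)]
  have h4 : 0 ≤ Matrix.trace ((A * (1 - P))ᵀ * (A * (1 - P))) := by
    rw [← sumsq_eq_trace]
    positivity
  linarith

lemma trace_spec {p : ℕ} (Q R : Matrix (Fin p) (Fin p) ℝ) (c e : Fin p → ℝ)
    (hQ : Qᵀ * Q = 1) (hR : Rᵀ * R = 1) :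
    Matrix.trace ((Q * Matrix.diagonal c * Qᵀ) * (R * Matrix.diagonal e * Rᵀ)) =
      ∑ i, ∑ j, (c i * e j) * ((Qᵀ * R) i j) ^ 2 := by
  have hQ' : Q * Qᵀ = 1 := mul_eq_one_comm.mp hQ
  set U : Matrix (Fin p) (Fin p) ℝ := Qᵀ * R with hU
  have key : (Q * Matrix.diagonal c * Qᵀ) * (R * Matrix.diagonal e * Rᵀ)
      = Q * (Matrix.diagonal c * U * Matrix.diagonal e * Uᵀ) * Qᵀ := by
    rw [hU, Matrix.transpose_mul, Matrix.transpose_transpose]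
    calc Q * Matrix.diagonal c * Qᵀ * (R * Matrix.diagonal e * Rᵀ)
        = Q * (Matrix.diagonal c * (Qᵀ * R) * Matrix.diagonal e) * Rᵀ := by
          simp only [Matrix.mul_assoc]
    _ = Q * (Matrix.diagonal c * (Qᵀ * R) * Matrix.diagonal e) * (Rᵀ * (Q * Qᵀ)) := by
        rw [hQ', Matrix.mul_one]
    _ = Q * (Matrix.diagonal c * (Qᵀ * R) * Matrix.diagonal e * (Rᵀ * Q)) * Qᵀ := by
        simp only [Matrix.mul_assoc]
  rw [key, Matrix.trace_mul_cycle, ← Matrix.mul_assoc, hQ, Matrix.one_mul]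
  rw [Matrix.trace]
  simp only [Matrix.diag_apply, Matrix.mul_apply, Matrix.transpose_apply,
    Matrix.diagonal_apply, ite_mul, mul_ite, zero_mul, mul_zero,
    Finset.sum_ite_eq, Finset.sum_ite_eq', Finset.mem_univ, if_true]
  exact Finset.sum_congr rfl fun i _ => Finset.sum_congr rfl fun j _ => by ring

lemma ds_rearrange {n : ℕ} (D : Matrix (Fin n) (Fin n) ℝ) (hD : D ∈ doublyStochastic ℝ (Fin n))
    (a b : Fin n → ℝ) (hab : Monovary a b) :
    ∑ i, ∑ j, D i j * (a i * b j) ≤ ∑ i, a i * b i := by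
  obtain ⟨w, hw0, hw1, hwD⟩ := exists_eq_sum_perm_of_mem_doublyStochastic hD
  have hDij : ∀ i j, D i j = ∑ σ : Equiv.Perm (Fin n), w σ * (σ.permMatrix ℝ) i j := by
    intro i j
    rw [← hwD]
    simp [Matrix.sum_apply]
  have key : ∑ i, ∑ j, D i j * (a i * b j)
      = ∑ σ : Equiv.Perm (Fin n), w σ * ∑ i, a i * b (σ i) := by
    calc ∑ i, ∑ j, D i j * (a i * b j)
        = ∑ i, ∑ j, ∑ σ : Equiv.Perm (Fin n), w σ * (σ.permMatrix ℝ) i j * (a i * b j) := by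
          simp_rw [hDij, Finset.sum_mul]
      _ = ∑ i, ∑ σ : Equiv.Perm (Fin n), ∑ j, w σ * (σ.permMatrix ℝ) i j * (a i * b j) :=
          Finset.sum_congr rfl fun i _ => Finset.sum_comm
      _ = ∑ σ : Equiv.Perm (Fin n), ∑ i, ∑ j, w σ * (σ.permMatrix ℝ) i j * (a i * b j) :=
          Finset.sum_comm
      _ = ∑ σ : Equiv.Perm (Fin n), w σ * ∑ i, a i * b (σ i) := by
          refine Finset.sum_congr rfl fun σ _ => ?_
          rw [Finset.mul_sum]
          refine Finset.sum_congr rfl fun i _ => ?_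
          simp [Equiv.Perm.permMatrix, PEquiv.toMatrix_apply, Equiv.toPEquiv_apply,
            ite_mul, mul_ite, Finset.sum_ite_eq', Finset.sum_ite_eq, mul_assoc]
  rw [key]
  calc ∑ σ : Equiv.Perm (Fin n), w σ * ∑ i, a i * b (σ i)
      ≤ ∑ σ : Equiv.Perm (Fin n), w σ * ∑ i, a i * b i := by
        refine Finset.sum_le_sum fun σ _ => mul_le_mul_of_nonneg_left ?_ (hw0 σ)
        exact hab.sum_mul_comp_perm_le_sum_mul
    _ = ∑ i, a i * b i := by rw [← Finset.sum_mul, hw1, one_mul]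

lemma one_entry_sum {p : ℕ} (c e : Fin p → ℝ) :
    ∑ i, ∑ j, (c i * e j) * ((1 : Matrix (Fin p) (Fin p) ℝ) i j) ^ 2 = ∑ i, c i * e i := by
  refine Finset.sum_congr rfl fun i _ => ?_
  rw [Finset.sum_eq_single i]
  · simp [Matrix.one_apply]
  · intro j _ hj
    simp [Matrix.one_apply, Ne.symm hj]
  · simp

lemma hoffman_wielandt {p : ℕ} (S Sh : Matrix (Fin p) (Fin p) ℝ) (a b : Fin p → ℝ)
    (hS : ∃ Q : Matrix (Fin p) (Fin p) ℝ, Qᵀ * Q = 1 ∧ S = Q * Matrix.diagonal a * Qᵀ)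
    (hSh : ∃ Q : Matrix (Fin p) (Fin p) ℝ, Qᵀ * Q = 1 ∧ Sh = Q * Matrix.diagonal b * Qᵀ)
    (hab : Monovary a b) :
    ∑ i, (a i - b i) ^ 2 ≤ Matrix.trace ((Sh - S)ᵀ * (Sh - S)) := by
  obtain ⟨Q, hQ, rfl⟩ := hS
  obtain ⟨Qh, hQh, rfl⟩ := hSh
  have hQ' : Q * Qᵀ = 1 := mul_eq_one_comm.mp hQ
  have hQh' : Qh * Qhᵀ = 1 := mul_eq_one_comm.mp hQh
  set S := Q * Matrix.diagonal a * Qᵀ with hSdef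
  set Sh := Qh * Matrix.diagonal b * Qhᵀ with hShdef
  have hSsym : Sᵀ = S := by
    rw [hSdef, Matrix.transpose_mul, Matrix.transpose_mul, Matrix.transpose_transpose,
      Matrix.diagonal_transpose, Matrix.mul_assoc]
  have hShsym : Shᵀ = Sh := by
    rw [hShdef, Matrix.transpose_mul, Matrix.transpose_mul, Matrix.transpose_transpose,
      Matrix.diagonal_transpose, Matrix.mul_assoc]
  have hE : (Sh - S)ᵀ * (Sh - S) = Sh * Sh - Sh * S - S * Sh + S * S := by
    rw [Matrix.transpose_sub, hSsym, hShsym]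
    noncomm_ring
  have htr : Matrix.trace ((Sh - S)ᵀ * (Sh - S))
      = Matrix.trace (Sh * Sh) - Matrix.trace (Sh * S) - Matrix.trace (S * Sh)
        + Matrix.trace (S * S) := by
    rw [hE, Matrix.trace_add, Matrix.trace_sub, Matrix.trace_sub]
  have hSS : Matrix.trace (S * S) = ∑ i, a i * a i := by
    rw [hSdef, trace_spec Q Q a a hQ hQ, hQ, one_entry_sum]
  have hShSh : Matrix.trace (Sh * Sh) = ∑ i, b i * b i := by
    rw [hShdef, trace_spec Qh Qh b b hQh hQh, hQh, one_entry_sum]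
  set U : Matrix (Fin p) (Fin p) ℝ := Qᵀ * Qh with hU
  have hUUt : U * Uᵀ = 1 := by
    rw [hU, Matrix.transpose_mul, Matrix.transpose_transpose, Matrix.mul_assoc,
      ← Matrix.mul_assoc Qh Qhᵀ Q, hQh', Matrix.one_mul, hQ]
  have hUtU : Uᵀ * U = 1 := by
    rw [hU, Matrix.transpose_mul, Matrix.transpose_transpose, Matrix.mul_assoc,
      ← Matrix.mul_assoc Q Qᵀ Qh, hQ', Matrix.one_mul, hQh]
  have hDds : (Matrix.of fun i j => (U i j) ^ 2) ∈ doublyStochastic ℝ (Fin p) := by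
    rw [mem_doublyStochastic_iff_sum]
    refine ⟨fun i j => sq_nonneg _, fun i => ?_, fun j => ?_⟩
    · have := congrFun (congrFun hUUt i) i
      simp only [Matrix.mul_apply, Matrix.transpose_apply, Matrix.one_apply_eq] at this
      simpa [pow_two] using this
    · have := congrFun (congrFun hUtU j) j
      simp only [Matrix.mul_apply, Matrix.transpose_apply, Matrix.one_apply_eq] at this
      simpa [pow_two] using this
  have hcross : Matrix.trace (S * Sh) ≤ ∑ i, a i * b i := by
    rw [hSdef, hShdef, trace_spec Q Qh a b hQ hQh]
    have h := ds_rearrange _ hDds a b hab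
    calc ∑ i, ∑ j, (a i * b j) * ((Qᵀ * Qh) i j) ^ 2
        = ∑ i, ∑ j, (Matrix.of fun i j => (U i j) ^ 2) i j * (a i * b j) := by
          refine Finset.sum_congr rfl fun i _ => Finset.sum_congr rfl fun j _ => ?_
          rw [hU]
          simp [Matrix.of_apply, mul_comm]
      _ ≤ ∑ i, a i * b i := h
  have hcross' : Matrix.trace (Sh * S) = Matrix.trace (S * Sh) := Matrix.trace_mul_comm _ _
  have hexp : ∑ i, (a i - b i) ^ 2
      = ∑ i, a i * a i + ∑ i, b i * b i - 2 * ∑ i, a i * b i := by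
    calc ∑ i, (a i - b i) ^ 2
        = ∑ i, (a i * a i + b i * b i - 2 * (a i * b i)) :=
          Finset.sum_congr rfl fun i _ => by ring
      _ = ∑ i, a i * a i + ∑ i, b i * b i - 2 * ∑ i, a i * b i := by
          rw [Finset.sum_sub_distrib, Finset.sum_add_distrib, Finset.mul_sum]
  rw [htr, hSS, hShSh, hcross', hexp]
  linarith [hcross]

theorem stmt11
    (p r s d : ℕ) (hr : 1 ≤ r) (hrs : r ≤ s) (hsp : s ≤ p) (hd : d = s - r + 1)
    (lam lamh : ℕ → ℝ)
    (hmono : ∀ i j, 1 ≤ i → i ≤ j → j ≤ p → lam j ≤ lam i)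
    (hmonoh : ∀ i j, 1 ≤ i → i ≤ j → j ≤ p → lamh j ≤ lamh i)
    (S Sh : Matrix (Fin p) (Fin p) ℝ) (hSsymm : S.IsSymm) (hShsymm : Sh.IsSymm)
    (hSspec : ∃ Q : Matrix (Fin p) (Fin p) ℝ, Qᵀ * Q = 1 ∧
      S = Q * Matrix.diagonal (fun i : Fin p => lam (i.1 + 1)) * Qᵀ)
    (hShspec : ∃ Q : Matrix (Fin p) (Fin p) ℝ, Qᵀ * Q = 1 ∧
      Sh = Q * Matrix.diagonal (fun i : Fin p => lamh (i.1 + 1)) * Qᵀ)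
    (Vh : Matrix (Fin p) (Fin d) ℝ) (hVh : Vhᵀ * Vh = 1)
    (hVheig : ∀ j : Fin d, Sh.mulVec (fun i => Vh i j) = lamh (r + j.1) • (fun i => Vh i j)) :
    frobNorm (Vh * Matrix.diagonal (fun j : Fin d => lam (r + j.1)) - S * Vh) ≤
      2 * frobNorm (Sh - S) := by
  classical
  set Λ := Matrix.diagonal (fun j : Fin d => lam (r + j.1)) with hΛ
  set Λh := Matrix.diagonal (fun j : Fin d => lamh (r + j.1)) with hΛh
  set E := Sh - S with hEdef
  -- eigen-equation in matrix form
  have hShVh : Sh * Vh = Vh * Λh := by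
    ext i j
    have h := congrFun (hVheig j) i
    simp only [Matrix.mulVec, dotProduct, Pi.smul_apply, smul_eq_mul] at h
    rw [Matrix.mul_apply, hΛh, Matrix.mul_diagonal]
    rw [h, mul_comm]
  -- decomposition
  have hdecomp : Vh * Λ - S * Vh = Vh * (Λ - Λh) + E * Vh := by
    rw [hEdef, Matrix.mul_sub, Matrix.sub_mul, hShVh]
    abel
  -- first term
  have hterm1 : frobNorm (Vh * (Λ - Λh))
      = Real.sqrt (∑ j : Fin d, (lam (r + j.1) - lamh (r + j.1)) ^ 2) := by
    have hdiag : Λ - Λh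
        = Matrix.diagonal (fun j : Fin d => lam (r + j.1) - lamh (r + j.1)) := by
      rw [hΛ, hΛh, Matrix.diagonal_sub]
    rw [hdiag, frobNorm]
    congr 1
    rw [Finset.sum_comm]
    refine Finset.sum_congr rfl fun j _ => ?_
    have h1 : ∑ i, Vh i j ^ 2 = 1 := by
      have := congrFun (congrFun hVh j) j
      simp only [Matrix.mul_apply, Matrix.transpose_apply, Matrix.one_apply_eq] at this
      simpa [pow_two] using this
    calc ∑ i, (Vh * Matrix.diagonal (fun j : Fin d => lam (r + j.1) - lamh (r + j.1))) i j ^ 2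
        = ∑ i, Vh i j ^ 2 * (lam (r + j.1) - lamh (r + j.1)) ^ 2 := by
          refine Finset.sum_congr rfl fun i _ => ?_
          rw [Matrix.mul_diagonal]; ring
      _ = (lam (r + j.1) - lamh (r + j.1)) ^ 2 := by rw [← Finset.sum_mul, h1, one_mul]
  -- embedding sum of d terms into sum of p terms
  have hembed : ∑ j : Fin d, (lam (r + j.1) - lamh (r + j.1)) ^ 2
      ≤ ∑ i : Fin p, (lam (i.1 + 1) - lamh (i.1 + 1)) ^ 2 := by
    set g : Fin p → ℝ := fun i => (lam (i.1 + 1) - lamh (i.1 + 1)) ^ 2 with hg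
    have hlt : ∀ j : Fin d, r - 1 + j.1 < p := by
      intro j
      have := j.isLt
      omega
    set e : Fin d → Fin p := fun j => ⟨r - 1 + j.1, hlt j⟩ with he
    have hinj : Function.Injective e := by
      intro j k hjk
      have := congrArg Fin.val hjk
      simp only [he] at this
      exact Fin.ext (by omega)
    calc ∑ j : Fin d, (lam (r + j.1) - lamh (r + j.1)) ^ 2
        = ∑ j : Fin d, g (e j) := by
          refine Finset.sum_congr rfl fun j _ => ?_
          have : r - 1 + j.1 + 1 = r + j.1 := by omega
          simp only [hg, he, this]
      _ = ∑ i ∈ Finset.univ.image e, g i :=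
          (Finset.sum_image fun j _ k _ h => hinj h).symm
      _ ≤ ∑ i : Fin p, g i :=
          Finset.sum_le_sum_of_subset_of_nonneg (Finset.subset_univ _)
            (fun i _ _ => sq_nonneg _)
  -- Hoffman–Wielandt
  have hmv : Monovary (fun i : Fin p => lam (i.1 + 1)) (fun i : Fin p => lamh (i.1 + 1)) := by
    have ha : Antitone (fun i : Fin p => lam (i.1 + 1)) := by
      intro i j hij
      exact hmono (i.1 + 1) (j.1 + 1) (by omega) (by have := Fin.le_def.mp hij; omega)
        (by have := j.isLt; omega)
    have hb : Antitone (fun i : Fin p => lamh (i.1 + 1)) := by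
      intro i j hij
      exact hmonoh (i.1 + 1) (j.1 + 1) (by omega) (by have := Fin.le_def.mp hij; omega)
        (by have := j.isLt; omega)
    exact ha.monovary hb
  have hHW : ∑ i : Fin p, (lam (i.1 + 1) - lamh (i.1 + 1)) ^ 2
      ≤ Matrix.trace (Eᵀ * E) := by
    have := hoffman_wielandt S Sh (fun i : Fin p => lam (i.1 + 1))
      (fun i : Fin p => lamh (i.1 + 1)) hSspec hShspec hmv
    simpa [hEdef] using this
  have hfrobE : frobNorm E = Real.sqrt (Matrix.trace (Eᵀ * E)) := by
    rw [frobNorm, sumsq_eq_trace]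
  -- term1 bound
  have ht1 : frobNorm (Vh * (Λ - Λh)) ≤ frobNorm E := by
    rw [hterm1, hfrobE]
    exact Real.sqrt_le_sqrt (le_trans hembed hHW)
  -- term2 bound
  have ht2 : frobNorm (E * Vh) ≤ frobNorm E := by
    rw [frobNorm, frobNorm, sumsq_eq_trace, sumsq_eq_trace]
    exact Real.sqrt_le_sqrt (trace_proj_le E Vh hVh)
  -- triangle inequality
  have htri : frobNorm (Vh * Λ - S * Vh) ≤ frobNorm (Vh * (Λ - Λh)) + frobNorm (E * Vh) := by
    rw [hdecomp, frobNorm_eq_norm, frobNorm_eq_norm, frobNorm_eq_norm]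
    exact norm_add_le _ _
  calc frobNorm (Vh * Λ - S * Vh) ≤ frobNorm (Vh * (Λ - Λh)) + frobNorm (E * Vh) := htri
    _ ≤ frobNorm E + frobNorm E := add_le_add ht1 ht2
    _ = 2 * frobNorm E := by ring
end
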